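/- arXiv:1107.1871 — 7 statements merged into one kernel-verified Lean document; each statement's English description precedes it below -/
import Mathlib

section
/- For all positive integers d and r, the sum over the positive divisors i of r of the number of integers j with 1 ≤ j and j·d ≤ i and gcd(j, i) = 1 equals ⌊r/d⌋. -/
/-- For all positive integers `d` and `r`, the sum over the positive divisors `i` of `r`
of the number of integers `j` with `1 ≤ j`, `j·d ≤ i` and `gcd(j, i) = 1`
equals `⌊r/d⌋`. -/
theorem sum_over_divisors_coprime_count (d r : ℕ) (hd : 0 < d) (hr : 0 < r) :
    ∑ i ∈ r.divisors,
      ((Finset.Icc 1 i).filter fun j => j * d ≤ i ∧ Nat.gcd j i = 1).card = r / d := by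
  rw [← Finset.card_sigma]
  rw [show r / d = (Finset.Icc 1 (r / d)).card by simp]
  apply Finset.card_nbij' (fun p => p.2 * (r / p.1))
    (fun m => ⟨r / Nat.gcd m r, m / Nat.gcd m r⟩)
  · rintro ⟨i, j⟩ hp
    simp only [Finset.mem_sigma, Nat.mem_divisors, Finset.mem_filter, Finset.mem_Icc, Finset.mem_coe] at hp
    obtain ⟨⟨hi, hr0⟩, ⟨hj1, hji⟩, hjd, hcop⟩ := hp
    have hipos : 0 < i := lt_of_lt_of_le hj1 hji
    have hri : i * (r / i) = r := Nat.mul_div_cancel' hi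
    have hripos : 0 < r / i := Nat.div_pos (Nat.le_of_dvd hr hi) hipos
    simp only [Finset.mem_Icc, Finset.mem_coe]
    refine ⟨Nat.one_le_iff_ne_zero.mpr (by positivity), ?_⟩
    rw [Nat.le_div_iff_mul_le hd]
    calc j * (r / i) * d = j * d * (r / i) := by ring
      _ ≤ i * (r / i) := Nat.mul_le_mul_right _ hjd
      _ = r := hri
  · intro m hm
    simp only [Finset.mem_Icc, Finset.mem_coe] at hm
    obtain ⟨hm1, hmd⟩ := hm
    have hmpos : 0 < m := hm1
    have hg : 0 < Nat.gcd m r := Nat.gcd_pos_of_pos_left _ hmpos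
    have hgm : Nat.gcd m r ∣ m := Nat.gcd_dvd_left _ _
    have hgr : Nat.gcd m r ∣ r := Nat.gcd_dvd_right _ _
    have hmr : m * d ≤ r := (Nat.le_div_iff_mul_le hd).mp hmd
    simp only [Finset.mem_sigma, Nat.mem_divisors, Finset.mem_filter, Finset.mem_Icc, Finset.mem_coe]
    refine ⟨⟨Nat.div_dvd_of_dvd hgr, hr.ne'⟩, ⟨?_, ?_⟩, ?_, Nat.coprime_div_gcd_div_gcd hg⟩
    · exact Nat.one_le_iff_ne_zero.mpr
        (Nat.div_ne_zero_iff_of_dvd hgm |>.mpr ⟨hmpos.ne', hg.ne'⟩)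
    · exact Nat.div_le_div_right (hmd.trans (Nat.div_le_self _ _))
    · apply Nat.le_of_mul_le_mul_right _ hg
      calc m / Nat.gcd m r * d * Nat.gcd m r
          = m * d := by rw [mul_right_comm, Nat.div_mul_cancel hgm]
        _ ≤ r := hmr
        _ = r / Nat.gcd m r * Nat.gcd m r := (Nat.div_mul_cancel hgr).symm
  · rintro ⟨i, j⟩ hp
    simp only [Finset.mem_sigma, Nat.mem_divisors, Finset.mem_filter, Finset.mem_Icc, Finset.mem_coe] at hp
    obtain ⟨⟨hi, hr0⟩, ⟨hj1, hji⟩, hjd, hcop⟩ := hp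
    have hipos : 0 < i := lt_of_lt_of_le hj1 hji
    have hripos : 0 < r / i := Nat.div_pos (Nat.le_of_dvd hr hi) hipos
    have hgcd : Nat.gcd (j * (r / i)) r = r / i := by
      have h := Nat.gcd_mul_right j (r / i) i
      rw [hcop, one_mul, Nat.mul_div_cancel' hi] at h
      exact h
    simp only [hgcd]
    congr 1
    · exact Nat.div_div_self hi hr.ne'
    · rw [Nat.mul_div_cancel _ hripos]
  · intro m hm
    simp only [Finset.mem_Icc, Finset.mem_coe] at hm
    have hg : 0 < Nat.gcd m r := Nat.gcd_pos_of_pos_left _ hm.1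
    have hgm : Nat.gcd m r ∣ m := Nat.gcd_dvd_left _ _
    have hgr : Nat.gcd m r ∣ r := Nat.gcd_dvd_right _ _
    simp only [Nat.div_div_self hgr hr.ne', Nat.div_mul_cancel hgm]
end

section
/- For integers d ≥ 2 and r ≥ 1, B_d(q^r − 1) = r + d·⌊r/d⌋ + d/2. -/
open Polynomial

/-- `φ_d(r)`: for `r = 1` it is `1/2`; for `r ≥ 2` it is the number of integers `j` with
`1 ≤ j ≤ r / d` that are coprime to `r`. -/
noncomputable def phiD (d r : ℕ) : ℚ :=
  if r = 1 then 1 / 2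
  else (((Finset.Icc 1 (r / d)).filter fun j => Nat.gcd j r = 1).card : ℚ)

/-- `B_d(f)` for `f` a rational constant times a power of `q` times a product of cyclotomic
polynomials: if `f = c·q^a·∏_{r≥1} Φ_r^{m_r}`, then `B_d(f) = 2a + Σ_r m_r·(φ(r) + d·φ_d(r))`.
The exponents are recovered as multiplicities; since `Φ_r ∣ f` forces
`φ(r) ≤ deg f` and `r ≤ 2·φ(r)²`, the sum below captures every relevant `r`. -/
noncomputable def Bd (d : ℕ) (f : Polynomial ℚ) : ℚ :=
  2 * (multiplicity X f : ℚ) +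
    ∑ r ∈ Finset.Icc 1 (2 * f.natDegree ^ 2 + 1),
      (multiplicity (cyclotomic r ℚ) f : ℚ) * ((Nat.totient r : ℚ) + d * phiD d r)

/-- The counting bijection: summing `#{1 ≤ j ≤ ⌊i/d⌋ : gcd(j,i)=1}` over divisors `i` of `r`
gives `⌊r/d⌋`.  The bijection sends a pair `(i, j)` to `k = j·(r/i)`, with inverse
`k ↦ (r / gcd(k,r), k / gcd(k,r))`. -/
lemma sum_count_coprime (d r : ℕ) (hd : 0 < d) (hr : 0 < r) :
    ∑ i ∈ r.divisors, ((Finset.Icc 1 (i / d)).filter fun j => Nat.gcd j i = 1).card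
      = r / d := by
  classical
  rw [← Finset.card_sigma]
  have hrne : r ≠ 0 := hr.ne'
  rw [show r / d = (Finset.Icc 1 (r / d)).card by simp [Nat.card_Icc]]
  refine Finset.card_bij' (fun (p : Σ _ : ℕ, ℕ) _ => p.2 * (r / p.1))
    (fun k _ => (⟨r / Nat.gcd k r, k / Nat.gcd k r⟩ : Σ _ : ℕ, ℕ)) ?_ ?_ ?_ ?_
  · rintro ⟨i, j⟩ hp
    simp only [Finset.mem_sigma, Nat.mem_divisors, Finset.mem_filter, Finset.mem_Icc] at hp
    obtain ⟨⟨hir, -⟩, ⟨hj1, hjd⟩, hgcd⟩ := hp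
    have hipos : 0 < i := Nat.pos_of_dvd_of_pos hir hr
    have hri : 0 < r / i := Nat.div_pos (Nat.le_of_dvd hr hir) hipos
    rw [Finset.mem_Icc]
    constructor
    · exact Nat.one_le_iff_ne_zero.mpr (Nat.mul_ne_zero (Nat.one_le_iff_ne_zero.mp hj1) hri.ne')
    · rw [Nat.le_div_iff_mul_le hd]
      have hjd' : j * d ≤ i := (Nat.le_div_iff_mul_le hd).mp hjd
      calc j * (r / i) * d = j * d * (r / i) := by ring
        _ ≤ i * (r / i) := Nat.mul_le_mul_right _ hjd'
        _ = r := Nat.mul_div_cancel' hir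
  · intro k hk
    rw [Finset.mem_Icc] at hk
    obtain ⟨hk1, hkd⟩ := hk
    have hkpos : 0 < k := hk1
    have hg : 0 < Nat.gcd k r := Nat.gcd_pos_of_pos_left _ hkpos
    have hgr : Nat.gcd k r ∣ r := Nat.gcd_dvd_right k r
    have hgk : Nat.gcd k r ∣ k := Nat.gcd_dvd_left k r
    simp only [Finset.mem_sigma, Nat.mem_divisors, Finset.mem_filter, Finset.mem_Icc]
    refine ⟨⟨Nat.div_dvd_of_dvd hgr, hrne⟩, ⟨?_, ?_⟩, ?_⟩
    · exact Nat.one_le_div_iff hg |>.mpr (Nat.le_of_dvd hkpos hgk)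
    · rw [Nat.le_div_iff_mul_le hd, Nat.le_div_iff_mul_le hg]
      calc k / Nat.gcd k r * d * Nat.gcd k r
          = k / Nat.gcd k r * Nat.gcd k r * d := by ring
        _ = k * d := by rw [Nat.div_mul_cancel hgk]
        _ ≤ r := (Nat.le_div_iff_mul_le hd).mp hkd
    · exact Nat.coprime_div_gcd_div_gcd hg
  · rintro ⟨i, j⟩ hp
    simp only [Finset.mem_sigma, Nat.mem_divisors, Finset.mem_filter, Finset.mem_Icc] at hp
    obtain ⟨⟨hir, -⟩, ⟨hj1, hjd⟩, hgcd⟩ := hp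
    have hipos : 0 < i := Nat.pos_of_dvd_of_pos hir hr
    have hri : 0 < r / i := Nat.div_pos (Nat.le_of_dvd hr hir) hipos
    have hgcd' : Nat.gcd (j * (r / i)) r = r / i := by
      have h1 : i * (r / i) = r := Nat.mul_div_cancel' hir
      calc Nat.gcd (j * (r / i)) r = Nat.gcd (j * (r / i)) (i * (r / i)) := by rw [h1]
        _ = Nat.gcd j i * (r / i) := Nat.gcd_mul_right _ _ _
        _ = r / i := by rw [hgcd, one_mul]
    have hdiv : r / (r / i) = i := Nat.div_div_self hir hrne
    refine Sigma.ext ?_ ?_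
    · simp [hgcd', hdiv]
    · simp only [hgcd', hdiv]
      rw [Nat.mul_div_cancel _ hri]
  · intro k hk
    rw [Finset.mem_Icc] at hk
    have hkpos : 0 < k := hk.1
    have hg : 0 < Nat.gcd k r := Nat.gcd_pos_of_pos_left _ hkpos
    have hgr : Nat.gcd k r ∣ r := Nat.gcd_dvd_right k r
    have hgk : Nat.gcd k r ∣ k := Nat.gcd_dvd_left k r
    simp only []
    rw [Nat.div_div_self hgr hrne, Nat.div_mul_cancel hgk]

lemma not_cyclotomic_dvd {i r : ℕ} (hi : 0 < i) (hr : 0 < r) (hir : ¬ i ∣ r) :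
    ¬ cyclotomic i ℚ ∣ (X ^ r - 1 : ℚ[X]) := by
  intro h
  rw [← prod_cyclotomic_eq_X_pow_sub_one hr ℚ] at h
  obtain ⟨j, hj, hdvd⟩ :=
    ((cyclotomic.irreducible_rat hi).prime).exists_mem_finset_dvd h
  have hjpos : 0 < j := Nat.pos_of_mem_divisors hj
  have hassoc : Associated (cyclotomic i ℚ) (cyclotomic j ℚ) :=
    (cyclotomic.irreducible_rat hi).associated_of_dvd (cyclotomic.irreducible_rat hjpos) hdvd
  have heq : cyclotomic i ℚ = cyclotomic j ℚ :=
    eq_of_monic_of_associated (cyclotomic.monic i ℚ) (cyclotomic.monic j ℚ) hassoc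
  have : i = j := cyclotomic_injective heq
  exact hir (this ▸ (Nat.mem_divisors.mp hj).1)

/-- For integers `d ≥ 2` and `r ≥ 1`, `B_d(q^r − 1) = r + d·⌊r/d⌋ + d/2`. -/
theorem Bd_X_pow_sub_one (d r : ℕ) (hd : 2 ≤ d) (hr : 1 ≤ r) :
    Bd d (X ^ r - 1) = (r : ℚ) + d * ((r / d : ℕ) : ℚ) + (d : ℚ) / 2 := by
  classical
  have hrpos : 0 < r := hr
  have hrne : r ≠ 0 := hrpos.ne'
  have hdpos : 0 < d := by omega
  have hne : (X ^ r - 1 : ℚ[X]) ≠ 0 := by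
    have : (X ^ r - C (1 : ℚ)).Monic := monic_X_pow_sub_C _ hrne
    simpa using this.ne_zero
  have hdeg : (X ^ r - 1 : ℚ[X]).natDegree = r := by
    have : (X ^ r - C (1 : ℚ)).natDegree = r := natDegree_X_pow_sub_C
    simpa using this
  have hsf : Squarefree (X ^ r - 1 : ℚ[X]) := by
    refine (X_pow_sub_one_separable_iff.mpr ?_).squarefree
    exact_mod_cast hrne
  have hmX : multiplicity (X : ℚ[X]) (X ^ r - 1) = 0 := by
    rw [multiplicity_eq_zero, X_dvd_iff, coeff_sub, coeff_X_pow, if_neg (by omega), coeff_one]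
    norm_num
  -- multiplicity of cyclotomic polynomials
  have hmult : ∀ i, 0 < i →
      multiplicity (cyclotomic i ℚ) (X ^ r - 1 : ℚ[X]) = if i ∈ r.divisors then 1 else 0 := by
    intro i hi
    by_cases hir : i ∣ r
    · rw [if_pos (Nat.mem_divisors.mpr ⟨hir, hrne⟩)]
      have hfin : FiniteMultiplicity (cyclotomic i ℚ) (X ^ r - 1 : ℚ[X]) :=
        FiniteMultiplicity.of_not_isUnit (cyclotomic.irreducible_rat hi).not_isUnit hne
      refine hfin.multiplicity_eq_iff.mpr ⟨?_, ?_⟩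
      · rw [pow_one, ← prod_cyclotomic_eq_X_pow_sub_one hrpos ℚ]
        exact Finset.dvd_prod_of_mem _ (Nat.mem_divisors.mpr ⟨hir, hrne⟩)
      · intro h2
        rw [pow_succ, pow_one] at h2
        exact (cyclotomic.irreducible_rat hi).not_isUnit (hsf _ h2)
    · rw [if_neg (fun h => hir (Nat.mem_divisors.mp h).1), multiplicity_eq_zero]
      exact not_cyclotomic_dvd hi hrpos hir
  unfold Bd
  rw [hmX, hdeg]
  have hstep : ∀ i ∈ Finset.Icc 1 (2 * r ^ 2 + 1),
      (multiplicity (cyclotomic i ℚ) (X ^ r - 1 : ℚ[X]) : ℚ)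
        * ((Nat.totient i : ℚ) + d * phiD d i)
      = if i ∈ r.divisors then ((Nat.totient i : ℚ) + d * phiD d i) else 0 := by
    intro i hi
    rw [Finset.mem_Icc] at hi
    rw [hmult i hi.1]
    split <;> simp
  rw [Finset.sum_congr rfl hstep, Finset.sum_ite_mem]
  have hsub : r.divisors ⊆ Finset.Icc 1 (2 * r ^ 2 + 1) := by
    intro i hi
    rw [Finset.mem_Icc]
    have h1 : 0 < i := Nat.pos_of_mem_divisors hi
    have h2 : i ≤ r := Nat.le_of_dvd hrpos (Nat.mem_divisors.mp hi).1
    constructor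
    · exact h1
    · nlinarith
  rw [Finset.inter_eq_right.mpr hsub]
  rw [Finset.sum_add_distrib]
  have htot : ∑ i ∈ r.divisors, (Nat.totient i : ℚ) = r := by
    rw [← Nat.cast_sum]
    exact_mod_cast congrArg (Nat.cast : ℕ → ℚ) (Nat.sum_totient r)
  have hphi : ∑ i ∈ r.divisors, phiD d i = 1 / 2 + ((r / d : ℕ) : ℚ) := by
    have h1mem : 1 ∈ r.divisors := Nat.one_mem_divisors.mpr hrne
    rw [← Finset.add_sum_erase _ _ h1mem]
    have h1 : phiD d 1 = 1 / 2 := by simp [phiD]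
    rw [h1]
    congr 1
    have herase : ∀ i ∈ r.divisors.erase 1, phiD d i
        = (((Finset.Icc 1 (i / d)).filter fun j => Nat.gcd j i = 1).card : ℚ) := by
      intro i hi
      have : i ≠ 1 := (Finset.mem_erase.mp hi).1
      simp [phiD, this]
    rw [Finset.sum_congr rfl herase, ← Nat.cast_sum]
    have hz : (((Finset.Icc 1 (1 / d)).filter fun j => Nat.gcd j 1 = 1).card) = 0 := by
      have : 1 / d = 0 := Nat.div_eq_of_lt (by omega)
      simp [this]
    have hadd := Finset.add_sum_erase r.divisors
      (fun i => ((Finset.Icc 1 (i / d)).filter fun j => Nat.gcd j i = 1).card) h1mem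
    have hcount := sum_count_coprime d r hdpos hrpos
    have : ∑ x ∈ r.divisors.erase 1,
        ((Finset.Icc 1 (x / d)).filter fun j => Nat.gcd j x = 1).card = r / d := by
      simp only [hz, zero_add] at hadd
      rw [hadd, hcount]
    rw [this]
  rw [htot, ← Finset.mul_sum, hphi]
  push_cast
  ring
end

section
/- Let d ≥ 2 be an integer, ζ = exp(2πi/d), and let r ≥ 1 be an integer with r ≠ d. Then Φ_r(ζ) ≠ 0 and the complex argument of Φ_r(ζ) is congruent to B_d(Φ_r)·π/d modulo 2π, where B_d(Φ_1) = 1 + d/2 and B_d(Φ_r) = φ(r) + d·φ_d(r) for r ≥ 2. -/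
open Polynomial

/-- `B_d(Φ_r)`: equal to `1 + d/2` for `r = 1` and to `φ(r) + d·φ_d(r)` for `r ≥ 2`. -/
noncomputable def BdCyc (d r : ℕ) : ℚ :=
  if r = 1 then 1 + (d : ℚ) / 2 else (Nat.totient r : ℚ) + d * phiD d r

namespace ArgCycAux
open Complex

lemma argExpAngle (θ : ℝ) : (Complex.arg (Complex.exp (θ * I)) : Real.Angle) = θ := by
  rw [Complex.exp_mul_I]
  have := Complex.arg_cos_add_sin_mul_I_coe_angle (θ : Real.Angle)
  rw [Real.Angle.cos_coe, Real.Angle.sin_coe, Complex.ofReal_cos, Complex.ofReal_sin] at this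
  exact this

lemma expSub (a b : ℝ) : Complex.exp (a * I) - Complex.exp (b * I)
    = (2 * Real.sin ((a - b)/2) : ℝ) * (I * Complex.exp ((((a + b)/2 : ℝ)) * I)) := by
  have h1 : ((a : ℂ)) * I = ((a+b)/2 : ℝ) * I + ((a-b)/2 : ℝ) * I := by push_cast; ring
  have h2 : ((b : ℂ)) * I = ((a+b)/2 : ℝ) * I + (-((a-b)/2 : ℝ)) * I := by push_cast; ring
  rw [h1, h2, Complex.exp_add, Complex.exp_add]
  have : ((2 * Real.sin ((a-b)/2) : ℝ) : ℂ) = 2 * Complex.sin (((a-b)/2 : ℝ)) := by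
    push_cast; ring
  rw [this, Complex.sin]
  push_cast
  ring_nf
  rw [Complex.I_sq]
  ring

lemma expPiHalf : Complex.exp (((Real.pi/2 : ℝ):ℂ) * I) = I := by
  rw [Complex.exp_mul_I, ← Complex.ofReal_cos, ← Complex.ofReal_sin,
    Real.cos_pi_div_two, Real.sin_pi_div_two]
  simp

lemma iExp (φ : ℝ) : I * Complex.exp ((φ:ℝ) * I) = Complex.exp (((φ + Real.pi/2 : ℝ)) * I) := by
  rw [show (((φ + Real.pi/2 : ℝ) : ℂ)) * I = (φ:ℝ)*I + ((Real.pi/2 : ℝ):ℂ)*I by push_cast; ring,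
    Complex.exp_add, expPiHalf]
  ring

lemma argFactor (c φ : ℝ) (hc : c ≠ 0) :
    (Complex.arg ((c:ℂ) * (I * Complex.exp ((φ:ℝ) * I))) : Real.Angle)
    = ((φ + Real.pi/2 : ℝ) : Real.Angle)
      + (if 0 < c then (0:Real.Angle) else (Real.pi : Real.Angle)) := by
  rw [iExp]
  rcases lt_or_gt_of_ne hc with hneg | hpos
  · rw [if_neg (not_lt.2 hneg.le)]
    have h1 : (c:ℂ) * Complex.exp (((φ + Real.pi/2 : ℝ)) * I)
        = -(((-c : ℝ):ℂ) * Complex.exp (((φ + Real.pi/2 : ℝ)) * I)) := by push_cast; ring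
    rw [h1, Complex.arg_neg_coe_angle (by
      simp only [ne_eq, mul_eq_zero, Complex.exp_ne_zero, or_false, Complex.ofReal_eq_zero]
      intro h; exact hc (by linarith)),
      Complex.arg_real_mul _ (by linarith : (0:ℝ) < -c), argExpAngle]
  · rw [if_pos hpos, Complex.arg_real_mul _ hpos, argExpAngle, add_zero]

lemma argProd {ι : Type*} (s : Finset ι) (f : ι → ℂ) (h : ∀ i ∈ s, f i ≠ 0) :
    ((∏ i ∈ s, f i).arg : Real.Angle) = ∑ i ∈ s, ((f i).arg : Real.Angle) := by
  classical
  induction s using Finset.cons_induction with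
  | empty => simp
  | cons a s ha ih =>
    rw [Finset.prod_cons, Finset.sum_cons,
      Complex.arg_mul_coe_angle (h a (Finset.mem_cons_self a s))
        (Finset.prod_ne_zero_iff.2 fun i hi => h i (Finset.mem_cons_of_mem hi)),
      ih fun i hi => h i (Finset.mem_cons_of_mem hi)]

lemma angleCoeSum {ι : Type*} (s : Finset ι) (f : ι → ℝ) :
    ((∑ i ∈ s, f i : ℝ) : Real.Angle) = ∑ i ∈ s, ((f i : ℝ) : Real.Angle) := by
  simp [← Real.Angle.coe_coeHom, map_sum]

lemma expInj {r : ℕ} (hr : r ≠ 0) {j j' : ℕ} (hj : j < r) (hj' : j' < r)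
    (h : Complex.exp (2 * Real.pi * I * ((j:ℂ) / r))
       = Complex.exp (2 * Real.pi * I * ((j':ℂ) / r))) :
    j = j' := by
  rw [Complex.exp_eq_exp_iff_exists_int] at h
  obtain ⟨n, hn⟩ := h
  have hrC : (r : ℂ) ≠ 0 := Nat.cast_ne_zero.2 hr
  have h2 : (2 * (Real.pi:ℂ) * I) ≠ 0 := Complex.two_pi_I_ne_zero
  have hn' : (2 * (Real.pi:ℂ) * I) * (j:ℂ) = (2 * (Real.pi:ℂ) * I) * ((j':ℂ) + n * r) := by
    have := hn
    field_simp at this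
    linear_combination (2 * (Real.pi:ℂ) * I) * this
  have hC := mul_left_cancel₀ h2 hn'
  have hZ : (j : ℤ) = j' + n * r := by exact_mod_cast hC
  have hrZ : (0:ℤ) < r := by exact_mod_cast Nat.pos_of_ne_zero hr
  have hn0 : n = 0 := by
    rcases lt_trichotomy n 0 with h | h | h
    · have : n * r ≤ -1 * r := mul_le_mul_of_nonneg_right (by omega) hrZ.le
      have hjZ : (0:ℤ) ≤ j := Int.natCast_nonneg j
      have hj'Z : (j' : ℤ) < r := by exact_mod_cast hj'
      linarith
    · exact h
    · have : 1 * r ≤ n * r := mul_le_mul_of_nonneg_right (by omega) hrZ.le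
      have hjZ : (j:ℤ) < r := by exact_mod_cast hj
      have hj'Z : (0:ℤ) ≤ j' := Int.natCast_nonneg j'
      linarith
  rw [hn0] at hZ
  exact_mod_cast (by simpa using hZ)

lemma primRootsEq (r : ℕ) (hr : r ≠ 0) :
    primitiveRoots r ℂ = ((Finset.range r).filter fun j => Nat.Coprime j r).image
      (fun j : ℕ => Complex.exp (2 * Real.pi * I * ((j:ℂ) / r))) := by
  ext μ
  rw [Finset.mem_image, mem_primitiveRoots (Nat.pos_of_ne_zero hr),
    Complex.isPrimitiveRoot_iff μ r hr]
  constructor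
  · rintro ⟨i, hir, hco, hexp⟩
    exact ⟨i, Finset.mem_filter.2 ⟨Finset.mem_range.2 hir, hco⟩, hexp⟩
  · rintro ⟨i, hi, hexp⟩
    obtain ⟨h1, h2⟩ := Finset.mem_filter.1 hi
    exact ⟨i, Finset.mem_range.1 h1, h2, hexp⟩

lemma cycEval (r : ℕ) (hr : r ≠ 0) (z : ℂ) :
    aeval z (cyclotomic r ℚ) = ∏ j ∈ (Finset.range r).filter (fun j => Nat.Coprime j r),
      (z - Complex.exp (2 * Real.pi * I * ((j:ℂ) / r))) := by
  have h := cyclotomic_eq_prod_X_sub_primitiveRoots (Complex.isPrimitiveRoot_exp r hr)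
  rw [aeval_def, eval₂_eq_eval_map, map_cyclotomic, h, primRootsEq r hr, Finset.prod_image
    (fun j hj j' hj' he => expInj hr (Finset.mem_range.1 (Finset.mem_filter.1 hj).1)
      (Finset.mem_range.1 (Finset.mem_filter.1 hj').1) he), eval_prod]
  simp

lemma cardJ (r : ℕ) :
    ((Finset.range r).filter (fun j => Nat.Coprime j r)).card = r.totient := by
  rw [Nat.totient]
  congr 1
  apply Finset.filter_congr
  intro x _
  simp [Nat.coprime_comm, Nat.Coprime]

lemma sumCop (r : ℕ) (hr : 2 ≤ r) :
    2 * ∑ j ∈ (Finset.range r).filter (fun j => Nat.Coprime j r), j = r * r.totient := by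
  set J := (Finset.range r).filter (fun j => Nat.Coprime j r) with hJ
  have hbd : ∀ j ∈ J, 1 ≤ j ∧ j < r := by
    intro j hj
    obtain ⟨h1, h2⟩ := Finset.mem_filter.1 hj
    have : j ≠ 0 := by rintro rfl; simp [Nat.Coprime] at h2; omega
    exact ⟨by omega, Finset.mem_range.1 h1⟩
  have hmem : ∀ j ∈ J, r - j ∈ J := by
    intro j hj
    obtain ⟨hj1, hj2⟩ := hbd j hj
    obtain ⟨h1, h2⟩ := Finset.mem_filter.1 hj
    refine Finset.mem_filter.2 ⟨Finset.mem_range.2 (by omega), ?_⟩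
    have hco1 : Nat.Coprime j (r - j) := by
      have h2' := h2
      rw [show r = (r - j) + j by omega, Nat.coprime_add_self_right] at h2'
      exact h2'
    have hco2 : Nat.Coprime (r - j) (j + (r - j)) := by
      rw [Nat.coprime_add_self_right]
      exact Nat.coprime_comm.1 hco1
    rwa [show j + (r - j) = r by omega] at hco2
  have hswap : ∑ j ∈ J, j = ∑ j ∈ J, (r - j) := by
    apply Finset.sum_nbij' (fun j => r - j) (fun j => r - j) hmem hmem
    · intro a ha; have := hbd a ha; omega
    · intro a ha; have := hbd a ha; omega
    · intro a ha; have := hbd a ha; omega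
  calc 2 * ∑ j ∈ J, j = (∑ j ∈ J, j) + ∑ j ∈ J, (r - j) := by rw [← hswap]; ring
    _ = ∑ j ∈ J, (j + (r - j)) := by rw [Finset.sum_add_distrib]
    _ = ∑ j ∈ J, r := Finset.sum_congr rfl fun j hj => by have := hbd j hj; omega
    _ = r * r.totient := by rw [Finset.sum_const, cardJ, smul_eq_mul, mul_comm]

lemma argTotal (d r : ℕ) (hd : 2 ≤ d) (hr : 1 ≤ r) (hrd : r ≠ d) :
    (aeval (Complex.exp (2 * Real.pi * Complex.I / d)) (cyclotomic r ℚ) ≠ 0) ∧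
    ((Complex.arg (aeval (Complex.exp (2 * Real.pi * Complex.I / d))
        (cyclotomic r ℚ)) : Real.Angle)
      = ((∑ j ∈ (Finset.range r).filter (fun j => Nat.Coprime j r),
           (Real.pi/d + Real.pi*j/r + Real.pi/2))
         + ((((Finset.range r).filter (fun j => Nat.Coprime j r)).filter
             (fun j => ¬ d*j < r)).card : ℝ) * Real.pi : ℝ)) := by
  classical
  have hr0 : r ≠ 0 := by omega
  have hd0R : (0:ℝ) < d := by exact_mod_cast (by omega : 0 < d)
  have hr0R : (0:ℝ) < r := by exact_mod_cast (by omega : 0 < r)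
  have hd2R : (2:ℝ) ≤ d := by exact_mod_cast hd
  set J := (Finset.range r).filter (fun j => Nat.Coprime j r) with hJdef
  set a : ℝ := 2*Real.pi/d with hadef
  set b : ℕ → ℝ := fun j => 2*Real.pi*j/r with hbdef
  have hζ : Complex.exp (2 * Real.pi * Complex.I / d) = Complex.exp ((a:ℝ)*I) := by
    congr 1; rw [hadef]; push_cast; ring
  have he : ∀ j : ℕ, Complex.exp (2 * Real.pi * I * ((j:ℂ) / r))
      = Complex.exp ((b j : ℝ)*I) := by
    intro j; congr 1; rw [hbdef]; push_cast; ring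
  have hval := cycEval r hr0 (Complex.exp (2 * Real.pi * Complex.I / d))
  -- sign facts
  have hsineq : ∀ j : ℕ, (a - b j)/2 = Real.pi * ((r:ℝ) - d*j) / (d*r) := by
    intro j; rw [hadef, hbdef]; field_simp
  have hsin : ∀ j ∈ J, if d*j < r then 0 < Real.sin ((a - b j)/2)
      else Real.sin ((a - b j)/2) < 0 := by
    intro j hj
    obtain ⟨h1, h2⟩ := Finset.mem_filter.1 hj
    have hjlt : j < r := Finset.mem_range.1 h1
    have hjltR : (j:ℝ) < r := by exact_mod_cast hjlt
    have hdj0 : (0:ℝ) ≤ (d:ℝ)*(j:ℝ) := by positivity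
    by_cases hc : d*j < r
    · rw [if_pos hc]
      have hnum : (0:ℝ) < (r:ℝ) - d*j := by
        have : ((d*j:ℕ):ℝ) < r := by exact_mod_cast hc
        push_cast at this; linarith
      apply Real.sin_pos_of_pos_of_lt_pi
      · rw [hsineq j]
        exact div_pos (mul_pos Real.pi_pos hnum) (mul_pos hd0R hr0R)
      · rw [hsineq j, div_lt_iff₀ (mul_pos hd0R hr0R)]
        have h2r : (2:ℝ)*r ≤ (d:ℝ)*r := mul_le_mul_of_nonneg_right hd2R hr0R.le
        exact mul_lt_mul_of_pos_left (by linarith) Real.pi_pos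
    · rw [if_neg hc]
      have hne : d*j ≠ r := by
        intro hEq
        have hdvd : j ∣ r := ⟨d, by rw [← hEq, Nat.mul_comm]⟩
        have hgcd : Nat.gcd j r = j := Nat.gcd_eq_left hdvd
        have h2' : Nat.gcd j r = 1 := h2
        rw [hgcd] at h2'
        subst h2'
        rw [Nat.mul_one] at hEq
        exact hrd hEq.symm
      have hgt : r < d*j := by omega
      have hgtR : (r:ℝ) < (d:ℝ)*j := by exact_mod_cast hgt
      apply Real.sin_neg_of_neg_of_neg_pi_lt
      · rw [hsineq j]
        exact div_neg_of_neg_of_pos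
          (mul_neg_of_pos_of_neg Real.pi_pos (by linarith)) (mul_pos hd0R hr0R)
      · rw [hsineq j, lt_div_iff₀ (mul_pos hd0R hr0R)]
        have hjlt1 : (j:ℝ) ≤ (r:ℝ) - 1 := by
          have : (j:ℝ) + 1 ≤ r := by exact_mod_cast hjlt
          linarith
        have hmul : (d:ℝ)*(j:ℝ) ≤ (d:ℝ)*((r:ℝ)-1) :=
          mul_le_mul_of_nonneg_left hjlt1 hd0R.le
        rw [show -Real.pi * ((d:ℝ)*(r:ℝ)) = Real.pi * (-((d:ℝ)*(r:ℝ))) by ring]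
        exact mul_lt_mul_of_pos_left (by nlinarith) Real.pi_pos
  have hfac : ∀ j : ℕ, Complex.exp (2 * Real.pi * Complex.I / d)
        - Complex.exp (2 * Real.pi * I * ((j:ℂ) / r))
      = ((2*Real.sin ((a - b j)/2) : ℝ):ℂ)
        * (I * Complex.exp ((((a + b j)/2 : ℝ):ℂ)*I)) := by
    intro j; rw [hζ, he j]; exact expSub a (b j)
  have hcne : ∀ j ∈ J, (2*Real.sin ((a - b j)/2) : ℝ) ≠ 0 := by
    intro j hj
    have := hsin j hj
    by_cases hc : d*j < r
    · rw [if_pos hc] at this; positivity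
    · rw [if_neg hc] at this; intro h; nlinarith
  have hnz : ∀ j ∈ J, Complex.exp (2 * Real.pi * Complex.I / d)
      - Complex.exp (2 * Real.pi * I * ((j:ℂ) / r)) ≠ 0 := by
    intro j hj
    rw [hfac j]
    exact mul_ne_zero (by exact_mod_cast Complex.ofReal_ne_zero.2 (hcne j hj))
      (mul_ne_zero Complex.I_ne_zero (Complex.exp_ne_zero _))
  constructor
  · rw [hval]
    exact Finset.prod_ne_zero_iff.2 hnz
  · have harg : ∀ j ∈ J, ((Complex.exp (2 * Real.pi * Complex.I / d)
          - Complex.exp (2 * Real.pi * I * ((j:ℂ) / r))).arg : Real.Angle)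
        = (((a + b j)/2 + Real.pi/2 : ℝ) : Real.Angle)
          + (if d*j < r then (0:Real.Angle) else (Real.pi : Real.Angle)) := by
      intro j hj
      rw [hfac j, argFactor _ _ (hcne j hj)]
      have := hsin j hj
      by_cases hc : d*j < r
      · rw [if_pos hc] at this ⊢
        rw [if_pos (by positivity : (0:ℝ) < 2*Real.sin ((a - b j)/2))]
      · rw [if_neg hc] at this ⊢
        rw [if_neg (by nlinarith : ¬ (0:ℝ) < 2*Real.sin ((a - b j)/2))]
    have hsum : ((aeval (Complex.exp (2 * Real.pi * Complex.I / d))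
          (cyclotomic r ℚ)).arg : Real.Angle)
        = ∑ j ∈ J, ((((a + b j)/2 + Real.pi/2 : ℝ) : Real.Angle)
            + (if d*j < r then (0:Real.Angle) else (Real.pi : Real.Angle))) := by
      rw [hval, argProd J _ hnz]
      exact Finset.sum_congr rfl harg
    rw [hsum, Finset.sum_add_distrib]
    have hterm : ∀ j : ℕ, (a + b j)/2 + Real.pi/2
        = Real.pi/d + Real.pi*j/r + Real.pi/2 := by
      intro j; rw [hadef, hbdef]; field_simp
    have hIf : ∑ j ∈ J, (if d*j < r then (0:Real.Angle) else (Real.pi : Real.Angle))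
        = ((J.filter (fun j => ¬ d*j < r)).card : ℕ) • ((Real.pi : ℝ) : Real.Angle) := by
      rw [← Finset.sum_filter_add_sum_filter_not J (fun j => d*j < r)]
      rw [Finset.sum_congr rfl (fun j hj => if_pos (Finset.mem_filter.1 hj).2),
        Finset.sum_congr rfl (fun j hj => if_neg (Finset.mem_filter.1 hj).2)]
      simp [Finset.sum_const]
    rw [hIf]
    have h1 : ∑ j ∈ J, (((a + b j)/2 + Real.pi/2 : ℝ) : Real.Angle)
        = ((∑ j ∈ J, (Real.pi/d + Real.pi*j/r + Real.pi/2) : ℝ) : Real.Angle) := by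
      rw [angleCoeSum]
      exact Finset.sum_congr rfl fun j _ => by rw [hterm j]
    rw [h1]
    rw [Real.Angle.coe_add, ← Real.Angle.coe_nsmul, nsmul_eq_mul]

end ArgCycAux

/-- Let `d ≥ 2`, `ζ = exp(2πi/d)`, and let `r ≥ 1` be an integer with `r ≠ d`. Then
`Φ_r(ζ) ≠ 0` and the complex argument of `Φ_r(ζ)` is congruent to `B_d(Φ_r)·π/d`
modulo `2π`. -/
theorem arg_cyclotomic_at_zeta (d r : ℕ) (hd : 2 ≤ d) (hr : 1 ≤ r) (hrd : r ≠ d) :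
    aeval (Complex.exp (2 * Real.pi * Complex.I / d)) (cyclotomic r ℚ) ≠ 0 ∧
    ∃ k : ℤ,
      Complex.arg (aeval (Complex.exp (2 * Real.pi * Complex.I / d)) (cyclotomic r ℚ))
        = (BdCyc d r : ℝ) * Real.pi / d + 2 * Real.pi * k := by
  classical
  obtain ⟨hne, hangle⟩ := ArgCycAux.argTotal d r hd hr hrd
  refine ⟨hne, ?_⟩
  have hd0R : (0:ℝ) < d := by exact_mod_cast (by omega : 0 < d)
  set v := aeval (Complex.exp (2 * Real.pi * Complex.I / d)) (cyclotomic r ℚ) with hv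
  set J := (Finset.range r).filter (fun j => Nat.Coprime j r) with hJdef
  set m := (J.filter (fun j => ¬ d*j < r)).card with hmdef
  set T : ℝ := (∑ j ∈ J, (Real.pi/d + Real.pi*j/r + Real.pi/2)) + (m:ℝ) * Real.pi with hTdef
  obtain ⟨k, hk⟩ := Real.Angle.angle_eq_iff_two_pi_dvd_sub.1 hangle
  rcases eq_or_lt_of_le hr with h1 | h2
  · -- r = 1
    have hr1 : r = 1 := h1.symm
    subst hr1
    have hJ1 : J = {0} := by rw [hJdef]; decide
    have hm0 : m = 0 := by
      rw [hmdef, hJ1, Finset.card_eq_zero, Finset.filter_eq_empty_iff]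
      intro j hj
      simp only [Finset.mem_singleton] at hj
      subst hj
      omega
    have hT : T = Real.pi/d + Real.pi/2 := by
      rw [hTdef, hJ1, hm0]
      simp
    have hB : ((BdCyc d 1 : ℚ) : ℝ) = 1 + (d:ℝ)/2 := by
      rw [BdCyc, if_pos rfl]; push_cast; ring
    refine ⟨k, ?_⟩
    rw [hB]
    have : (1 + (d:ℝ)/2) * Real.pi / d = Real.pi/d + Real.pi/2 := by
      field_simp
    rw [this, ← hT]
    linarith [hk]
  · -- 2 ≤ r
    have hr2 : 2 ≤ r := h2
    have hr0R : (0:ℝ) < r := by exact_mod_cast (by omega : 0 < r)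
    set N := ((Finset.Icc 1 (r / d)).filter fun j => Nat.gcd j r = 1).card with hNdef
    have hfilter : J.filter (fun j => d*j < r)
        = (Finset.Icc 1 (r / d)).filter (fun j => Nat.gcd j r = 1) := by
      ext j
      simp only [hJdef, Finset.mem_filter, Finset.mem_range, Finset.mem_Icc, Nat.Coprime]
      have hcm : ∀ j : ℕ, j * d = d * j := fun j => Nat.mul_comm j d
      constructor
      · rintro ⟨⟨hjr, hco⟩, hlt⟩
        have hj0 : j ≠ 0 := by rintro rfl; rw [Nat.gcd_zero_left] at hco; omega
        refine ⟨⟨by omega, ?_⟩, hco⟩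
        rw [Nat.le_div_iff_mul_le (by omega : 0 < d)]
        have := hcm j
        omega
      · rintro ⟨⟨hj1, hjd⟩, hco⟩
        rw [Nat.le_div_iff_mul_le (by omega : 0 < d)] at hjd
        have hcmj := hcm j
        have hne : d*j ≠ r := by
          intro hEq
          have hdvd : j ∣ r := ⟨d, by rw [← hEq, Nat.mul_comm]⟩
          have hgcd : Nat.gcd j r = j := Nat.gcd_eq_left hdvd
          rw [hgcd] at hco
          subst hco
          rw [Nat.mul_one] at hEq
          exact hrd hEq.symm
        have h2j : 2*j ≤ d*j := Nat.mul_le_mul_right j hd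
        exact ⟨⟨by omega, hco⟩, by omega⟩
    have hJcard : J.card = r.totient := by rw [hJdef]; exact ArgCycAux.cardJ r
    have hcardsplit : N + m = r.totient := by
      have h := Finset.card_filter_add_card_filter_not
        (s := J) (p := fun j => d*j < r)
      rw [hfilter] at h
      rw [hNdef, hmdef]
      omega
    have hSigma : (2:ℝ) * ∑ j ∈ J, (j:ℝ) = (r:ℝ) * r.totient := by
      have h := ArgCycAux.sumCop r hr2
      have h' : ((2 * ∑ j ∈ (Finset.range r).filter (fun j => Nat.Coprime j r), j : ℕ) : ℝ)
          = ((r * r.totient : ℕ) : ℝ) := by exact_mod_cast h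
      push_cast at h'
      rw [hJdef]
      exact h'
    have hsum : ∑ j ∈ J, (Real.pi/d + Real.pi*j/r + Real.pi/2)
        = (r.totient : ℝ) * (Real.pi/d + Real.pi/2)
          + (Real.pi/r) * ∑ j ∈ J, (j:ℝ) := by
      have : ∀ j : ℕ, Real.pi/d + Real.pi*j/r + Real.pi/2
          = (Real.pi/d + Real.pi/2) + (Real.pi/r)*(j:ℝ) := fun j => by field_simp; ring
      rw [Finset.sum_congr rfl (fun j _ => this j), Finset.sum_add_distrib,
        Finset.sum_const, ← Finset.mul_sum, ← ArgCycAux.cardJ r, hJdef]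
      simp [nsmul_eq_mul]
      ring_nf
    have hmR : (m:ℝ) = (r.totient : ℝ) - N := by
      have : (N:ℝ) + m = r.totient := by exact_mod_cast hcardsplit
      linarith
    have hB : ((BdCyc d r : ℚ) : ℝ) = (r.totient : ℝ) + (d:ℝ) * N := by
      rw [BdCyc, if_neg (by omega), phiD, if_neg (by omega), hNdef]
      push_cast; ring
    have hT : T = ((BdCyc d r : ℚ) : ℝ) * Real.pi / d
        + 2 * Real.pi * ((r.totient : ℝ) - N) := by
      rw [hTdef, hsum, hmR, hB]
      have hSigval : ∑ j ∈ J, (j:ℝ) = (r:ℝ) * r.totient / 2 := by linarith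
      rw [hSigval]
      field_simp
      ring
    refine ⟨k + (r.totient : ℤ) - N, ?_⟩
    have hNle : (N:ℝ) ≤ r.totient := by
      have : N ≤ r.totient := by omega
      exact_mod_cast this
    push_cast
    rw [hT] at hk
    linarith [hk]
end

section
/- Let d ≥ 2 be an integer and ζ = exp(2πi/d). Let f ∈ ℚ[q] be a nonzero polynomial which is a product of a positive rational constant, a power of q, and cyclotomic polynomials, such that Φ_d does not divide f. Then f(ζ) ≠ 0 and the complex argument of f(ζ) is congruent to B_d(f)·π/d modulo 2π. -/
open Polynomial

/-- `f` is a product of a positive rational constant, a power of `q`, and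
cyclotomic polynomials. -/
def IsPosCycProduct (f : Polynomial ℚ) : Prop :=
  ∃ (c : ℚ) (a : ℕ) (L : Multiset ℕ), 0 < c ∧ (∀ r ∈ L, 0 < r) ∧
    f = C c * X ^ a * (L.map fun r => cyclotomic r ℚ).prod

namespace ArgCycAux
open Complex


lemma totient_sq_aux : ∀ r : ℕ, r ≤ 2 * (Nat.totient r)^2 ∧ (¬ 2 ∣ r → r ≤ (Nat.totient r)^2) := by
  intro r
  induction r using Nat.recOnPosPrimePosCoprime with
  | prime_pow p n hp hn =>
      rw [Nat.totient_prime_pow hp hn]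
      rcases eq_or_ne p 2 with rfl | hodd
      · constructor
        · have h1 : 2 * (2 ^ (n - 1) * (2-1)) ^ 2 = 2 ^ (2*(n-1)+1) := by
            norm_num [← pow_mul, ← pow_succ', Nat.mul_comm]
          calc (2:ℕ)^n ≤ 2 ^ (2*(n-1)+1) := Nat.pow_le_pow_right (by norm_num) (by omega)
            _ = _ := h1.symm
        · intro h; exact absurd (dvd_pow_self 2 hn.ne') h
      · have hp3 : 3 ≤ p := by have := hp.two_le; omega
        obtain ⟨q, rfl⟩ : ∃ q, p = q + 1 := ⟨p - 1, by omega⟩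
        have hq2 : 2 ≤ q := by omega
        have key : (q+1)^n ≤ ((q+1)^(n-1)*((q+1)-1))^2 := by
          have e1 : (q+1) - 1 = q := by omega
          rw [e1, mul_pow]
          calc (q+1)^n = (q+1)^(n-1)*(q+1) := by
                rw [← pow_succ]; congr 1; omega
            _ ≤ (q+1)^(n-1)*q^2 := Nat.mul_le_mul_left _ (by nlinarith)
            _ ≤ ((q+1)^(n-1))^2*q^2 :=
                Nat.mul_le_mul_right _ (Nat.le_self_pow two_ne_zero _)
        exact ⟨key.trans (Nat.le_mul_of_pos_left _ two_pos), fun _ => key⟩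
  | zero => simp
  | one => simp
  | coprime a b ha hb hab iha ihb =>
      rw [Nat.totient_mul hab, mul_pow]
      have h2 : ¬ 2 ∣ a ∨ ¬ 2 ∣ b := by
        by_contra h; push_neg at h
        have := Nat.dvd_gcd h.1 h.2
        rw [Nat.Coprime] at hab
        rw [hab] at this
        omega
      constructor
      · rcases h2 with h2 | h2
        · calc a*b ≤ (Nat.totient a^2) * (2 * Nat.totient b ^2) :=
                Nat.mul_le_mul (iha.2 h2) ihb.1
            _ = 2 * (Nat.totient a^2 * Nat.totient b^2) := by ring
        · calc a*b ≤ (2 * Nat.totient a^2) * (Nat.totient b ^2) :=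
                Nat.mul_le_mul iha.1 (ihb.2 h2)
            _ = 2 * (Nat.totient a^2 * Nat.totient b^2) := by ring
      · intro h
        have ha2 : ¬ 2 ∣ a := fun hh => h (hh.mul_right b)
        have hb2 : ¬ 2 ∣ b := fun hh => h (hh.mul_left a)
        exact Nat.mul_le_mul (iha.2 ha2) (ihb.2 hb2)

lemma totient_sq (r : ℕ) : r ≤ 2 * (Nat.totient r)^2 := (totient_sq_aux r).1



lemma gauss_sum {r : ℕ} (hr : 2 ≤ r) :
    ∑ j ∈ (Finset.range r).filter (fun j => Nat.Coprime j r), j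
      + ∑ j ∈ (Finset.range r).filter (fun j => Nat.Coprime j r), j
      = r * Nat.totient r := by
  set T := (Finset.range r).filter (fun j => Nat.Coprime j r) with hT
  have hmem : ∀ j ∈ T, 1 ≤ j ∧ j < r ∧ Nat.Coprime j r := by
    intro j hj
    rw [hT, Finset.mem_filter, Finset.mem_range] at hj
    refine ⟨?_, hj.1, hj.2⟩
    rcases Nat.eq_zero_or_pos j with rfl | h
    · have := hj.2; rw [Nat.Coprime, Nat.gcd_zero_left] at this; omega
    · exact h
  have hgcd : ∀ j, 1 ≤ j → j < r → Nat.gcd (r - j) r = Nat.gcd j r := by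
    intro j h1 h2
    have e1 : r - (r - j) = j := by omega
    rw [Nat.gcd_comm (r - j) r, ← Nat.gcd_sub_self_left (Nat.sub_le r j), e1,
      Nat.gcd_comm j (r - j), Nat.gcd_sub_self_left h2.le, Nat.gcd_comm r j]
  have hswap : ∀ j ∈ T, r - j ∈ T := by
    intro j hj
    obtain ⟨h1, h2, h3⟩ := hmem j hj
    rw [hT, Finset.mem_filter, Finset.mem_range]
    exact ⟨by omega, by rw [Nat.Coprime, hgcd j h1 h2]; exact h3⟩
  have hrefl : ∑ j ∈ T, j = ∑ j ∈ T, (r - j) := by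
    refine Finset.sum_nbij' (fun j => r - j) (fun j => r - j) hswap hswap ?_ ?_ ?_
    · intro a ha; obtain ⟨h1, h2, _⟩ := hmem a ha; omega
    · intro a ha; obtain ⟨h1, h2, _⟩ := hmem a ha; omega
    · intro a ha; obtain ⟨h1, h2, _⟩ := hmem a ha; omega
  have hcard : T.card = Nat.totient r := by
    rw [Nat.totient_eq_card_coprime, hT]
    congr 1
    apply Finset.filter_congr
    intro x _
    simp [Nat.coprime_comm]
  calc ∑ j ∈ T, j + ∑ j ∈ T, j = ∑ j ∈ T, j + ∑ j ∈ T, (r - j) := by rw [← hrefl]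
    _ = ∑ j ∈ T, (j + (r - j)) := (Finset.sum_add_distrib).symm
    _ = ∑ j ∈ T, r := Finset.sum_congr rfl (fun j hj => by
        obtain ⟨h1, h2, _⟩ := hmem j hj; omega)
    _ = T.card * r := by rw [Finset.sum_const, smul_eq_mul]
    _ = r * Nat.totient r := by rw [hcard, Nat.mul_comm]



lemma exp_pi_div_two_mul_I : Complex.exp (((Real.pi/2 : ℝ):ℂ)*I) = I := by
  rw [exp_mul_I, ← Complex.ofReal_cos, ← Complex.ofReal_sin, Real.cos_pi_div_two,
    Real.sin_pi_div_two]
  simp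

lemma exp_sub_exp (s t : ℝ) :
    Complex.exp ((s:ℂ)*I) - Complex.exp ((t:ℂ)*I)
      = ((2 * Real.sin ((s-t)/2) : ℝ) : ℂ) * Complex.exp ((((s+t)/2 + Real.pi/2 : ℝ) : ℂ)*I) := by
  have keyC : ∀ u v : ℂ, Complex.exp ((v+u)*I) - Complex.exp ((v-u)*I)
      = 2 * Complex.sin u * I * Complex.exp (v*I) := by
    intro u v
    rw [show (v+u)*I = v*I + u*I by ring, show (v-u)*I = v*I + (-u)*I by ring,
      Complex.exp_add, Complex.exp_add, exp_mul_I, exp_mul_I, exp_mul_I, Complex.cos_neg, Complex.sin_neg]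
    ring
  have key : ∀ u v : ℝ, Complex.exp (((v+u:ℝ):ℂ)*I) - Complex.exp (((v-u:ℝ):ℂ)*I)
      = 2 * (Real.sin u : ℂ) * I * Complex.exp (((v:ℝ):ℂ)*I) := by
    intro u v
    rw [Complex.ofReal_sin]
    push_cast
    exact keyC u v
  have h1 : s = (s+t)/2 + (s-t)/2 := by ring
  have h2 : t = (s+t)/2 - (s-t)/2 := by ring
  calc Complex.exp ((s:ℂ)*I) - Complex.exp ((t:ℂ)*I)
      = Complex.exp ((((s+t)/2 + (s-t)/2 :ℝ):ℂ)*I) - Complex.exp ((((s+t)/2 - (s-t)/2:ℝ):ℂ)*I) := by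
        rw [← h1, ← h2]
    _ = 2 * Real.sin ((s-t)/2) * I * Complex.exp ((((s+t)/2:ℝ):ℂ)*I) := key _ _
    _ = _ := by
        rw [show ((((s+t)/2 + Real.pi/2 : ℝ)):ℂ)*I = (((s+t)/2:ℝ):ℂ)*I + ((Real.pi/2:ℝ):ℂ)*I by
          push_cast; ring, Complex.exp_add]
        rw [exp_pi_div_two_mul_I]
        push_cast
        ring

lemma argAngle_exp (θ : ℝ) : ((Complex.exp ((θ:ℂ)*I)).arg : Real.Angle) = (θ : Real.Angle) := by
  rw [exp_mul_I]
  have : (Complex.cos θ + Complex.sin θ * I)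
      = Real.Angle.cos (θ:Real.Angle) + Real.Angle.sin (θ:Real.Angle) * I := by
    rw [Real.Angle.cos_coe, Real.Angle.sin_coe]
    push_cast [Complex.ofReal_cos, Complex.ofReal_sin]
    ring
  rw [this, Complex.arg_cos_add_sin_mul_I_coe_angle]

lemma argAngle_real_mul_exp {x : ℝ} (θ : ℝ) (hx : x ≠ 0) :
    (((x:ℂ) * Complex.exp ((θ:ℂ)*I)).arg : Real.Angle)
      = (θ : Real.Angle) + (if 0 < x then 0 else (Real.pi : Real.Angle)) := by
  rcases lt_or_gt_of_ne hx with hneg | hpos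
  · rw [if_neg (by linarith)]
    have hxe : (x:ℂ) * Complex.exp ((θ:ℂ)*I) = -(((-x:ℝ):ℂ) * Complex.exp ((θ:ℂ)*I)) := by
      push_cast; ring
    have hne : ((-x:ℝ):ℂ) * Complex.exp ((θ:ℂ)*I) ≠ 0 :=
      mul_ne_zero (Complex.ofReal_ne_zero.mpr (by linarith)) (Complex.exp_ne_zero _)
    rw [hxe, Complex.arg_neg_coe_angle hne]
    have : ((((-x:ℝ):ℂ) * Complex.exp ((θ:ℂ)*I)).arg : Real.Angle) = (θ : Real.Angle) := by
      rw [Complex.arg_real_mul _ (by linarith : (0:ℝ) < -x), argAngle_exp]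
    rw [this]
  · rw [if_pos hpos, add_zero, Complex.arg_real_mul _ hpos, argAngle_exp]

lemma argAngle_multiset_prod (M : Multiset ℂ) (h : ∀ z ∈ M, z ≠ 0) :
    M.prod ≠ 0 ∧ ((M.prod).arg : Real.Angle)
      = (M.map (fun z => ((z.arg : ℝ) : Real.Angle))).sum := by
  induction M using Multiset.induction_on with
  | empty => simp [Complex.arg_one]
  | cons a M ih =>
      have ha : a ≠ 0 := h a (Multiset.mem_cons_self a M)
      obtain ⟨h1, h2⟩ := ih (fun z hz => h z (Multiset.mem_cons_of_mem hz))
      constructor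
      · rw [Multiset.prod_cons]; exact mul_ne_zero ha h1
      · rw [Multiset.prod_cons, Complex.arg_mul_coe_angle ha h1, h2, Multiset.map_cons,
          Multiset.sum_cons]

lemma argAngle_finset_prod {ι : Type*} (s : Finset ι) (g : ι → ℂ) (h : ∀ i ∈ s, g i ≠ 0) :
    (∏ i ∈ s, g i) ≠ 0 ∧ (((∏ i ∈ s, g i)).arg : Real.Angle)
      = ∑ i ∈ s, (((g i).arg : ℝ) : Real.Angle) := by
  classical
  obtain ⟨h1, h2⟩ := argAngle_multiset_prod (s.val.map g) (by
    intro z hz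
    obtain ⟨i, hi, rfl⟩ := Multiset.mem_map.mp hz
    exact h i hi)
  rw [Finset.prod_eq_multiset_prod]
  refine ⟨h1, ?_⟩
  rw [h2, Multiset.map_map, Finset.sum_eq_multiset_sum]
  rfl



lemma cyclo_eval_zero_ne {r : ℕ} (hr : 0 < r) : eval 0 (cyclotomic r ℚ) ≠ 0 := by
  rcases eq_or_lt_of_le (Nat.succ_le_of_lt hr) with h1 | h2
  · have hr1 : r = 1 := by omega
    subst hr1
    rw [cyclotomic_one]
    simp
  · have : (cyclotomic r ℚ).coeff 0 = 1 := cyclotomic_coeff_zero ℚ h2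
    rw [← coeff_zero_eq_eval_zero, this]
    norm_num

lemma exists_mem_of_prime_dvd_prod {p : ℚ[X]} (hp : Prime p) {M : Multiset ℚ[X]}
    (h : p ∣ M.prod) : ∃ x ∈ M, p ∣ x := by
  induction M using Multiset.induction_on with
  | empty =>
      rw [Multiset.prod_zero] at h
      exact absurd h hp.not_dvd_one
  | cons a M ih =>
      rw [Multiset.prod_cons] at h
      rcases hp.dvd_mul.mp h with h' | h'
      · exact ⟨a, Multiset.mem_cons_self a M, h'⟩
      · obtain ⟨x, hx, hdx⟩ := ih h'
        exact ⟨x, Multiset.mem_cons_of_mem hx, hdx⟩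

lemma cyclo_prod_eval_zero_ne {L : Multiset ℕ} (hL : ∀ r ∈ L, 0 < r) :
    eval 0 ((L.map fun r => cyclotomic r ℚ).prod) ≠ 0 := by
  rw [show eval 0 ((L.map fun r => cyclotomic r ℚ).prod)
      = (evalRingHom (0:ℚ)) ((L.map fun r => cyclotomic r ℚ).prod) from rfl,
    map_multiset_prod, Multiset.map_map]
  rw [ne_eq, Multiset.prod_eq_zero_iff]
  intro h
  obtain ⟨r, hr, hre⟩ := Multiset.mem_map.mp h
  exact cyclo_eval_zero_ne (hL r hr) hre

lemma mult_X {c : ℚ} {a : ℕ} {L : Multiset ℕ} (hc : c ≠ 0) (hL : ∀ r ∈ L, 0 < r) :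
    multiplicity X (C c * X^a * (L.map fun r => cyclotomic r ℚ).prod) = a := by
  set M := (L.map fun r => cyclotomic r ℚ).prod with hM
  apply multiplicity_eq_of_dvd_of_not_dvd
  · exact ⟨C c * M, by ring⟩
  · rintro ⟨g, hg⟩
    have hXne : (X:ℚ[X])^a ≠ 0 := pow_ne_zero _ X_ne_zero
    have hkey : C c * M = X * g := by
      apply mul_left_cancel₀ hXne
      calc X^a * (C c * M) = C c * X^a * M := by ring
        _ = X^(a+1) * g := hg
        _ = X^a * (X * g) := by ring
    have h0 : c * eval 0 M = 0 := by
      have := congrArg (eval 0) hkey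
      simpa using this
    rcases mul_eq_zero.mp h0 with h | h
    · exact hc h
    · exact cyclo_prod_eval_zero_ne hL h

lemma mult_cyclo {c : ℚ} {a : ℕ} {L : Multiset ℕ} (hc : c ≠ 0) (hL : ∀ r ∈ L, 0 < r)
    {s : ℕ} (hs : 0 < s) :
    multiplicity (cyclotomic s ℚ) (C c * X^a * (L.map fun r => cyclotomic r ℚ).prod)
      = L.count s := by
  set Q := ((L.filter (fun r => ¬ r = s)).map fun r => cyclotomic r ℚ).prod with hQ
  have hdecomp : (L.map fun r => cyclotomic r ℚ).prod
      = (cyclotomic s ℚ)^(L.count s) * Q := by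
    rw [hQ]
    conv_lhs => rw [← Multiset.filter_add_not (fun r => r = s) L]
    rw [Multiset.map_add, Multiset.prod_add, Multiset.filter_eq', Multiset.map_replicate,
      Multiset.prod_replicate]
  have hprime : Prime (cyclotomic s ℚ) := (cyclotomic.irreducible_rat hs).prime
  apply multiplicity_eq_of_dvd_of_not_dvd
  · exact ⟨C c * X^a * Q, by rw [hdecomp]; ring⟩
  · rintro ⟨g, hg⟩
    have hcpow : (cyclotomic s ℚ)^(L.count s) ≠ 0 := pow_ne_zero _ (cyclotomic_ne_zero s ℚ)
    have hdvd : cyclotomic s ℚ ∣ C c * X^a * Q := by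
      refine ⟨g, mul_left_cancel₀ hcpow ?_⟩
      calc (cyclotomic s ℚ)^(L.count s) * (C c * X^a * Q)
          = C c * X^a * ((cyclotomic s ℚ)^(L.count s) * Q) := by ring
        _ = (cyclotomic s ℚ)^(L.count s + 1) * g := by rw [← hdecomp]; exact hg
        _ = (cyclotomic s ℚ)^(L.count s) * (cyclotomic s ℚ * g) := by ring
    rcases hprime.dvd_mul.mp hdvd with h | h
    · rcases hprime.dvd_mul.mp h with h' | h'
      · exact hprime.not_unit (isUnit_of_dvd_unit h' (isUnit_C.mpr (isUnit_iff_ne_zero.mpr hc)))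
      · have hX : cyclotomic s ℚ ∣ X := hprime.dvd_of_dvd_pow h'
        have hassoc : Associated (cyclotomic s ℚ) X :=
          (cyclotomic.irreducible_rat hs).associated_of_dvd irreducible_X hX
        obtain ⟨u, hu⟩ := hassoc
        have h0 : eval 0 (cyclotomic s ℚ) * eval 0 (u : ℚ[X]) = 0 := by
          have := congrArg (eval 0) hu
          simpa using this
        obtain ⟨v, hv, hvu⟩ := Polynomial.isUnit_iff.mp u.isUnit
        rcases mul_eq_zero.mp h0 with h | h
        · exact cyclo_eval_zero_ne hs h
        · rw [← hvu] at h
          simp at h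
          exact hv.ne_zero h
    · obtain ⟨q, hq, hdq⟩ := exists_mem_of_prime_dvd_prod hprime h
      obtain ⟨t, ht, rfl⟩ := Multiset.mem_map.mp hq
      have htL : t ∈ L := (Multiset.mem_filter.mp ht).1
      have hts : ¬ t = s := (Multiset.mem_filter.mp ht).2
      have heq : cyclotomic s ℚ = cyclotomic t ℚ :=
        eq_of_monic_of_associated (cyclotomic.monic s ℚ) (cyclotomic.monic t ℚ)
          ((cyclotomic.irreducible_rat hs).associated_of_dvd
            (cyclotomic.irreducible_rat (hL t htL)) hdq)
      exact hts (cyclotomic_injective heq).symm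

lemma cyclo_arg {d r : ℕ} (hd : 2 ≤ d) (hr : 0 < r) (hrd : r ≠ d) :
    aeval (Complex.exp (((2*Real.pi/d : ℝ):ℂ)*I)) (cyclotomic r ℚ) ≠ 0 ∧
    ((aeval (Complex.exp (((2*Real.pi/d : ℝ):ℂ)*I)) (cyclotomic r ℚ)).arg : Real.Angle)
      = ((((Nat.totient r : ℚ) + d * phiD d r : ℚ) : ℝ) * Real.pi / d : ℝ) := by
  have hd0 : (d:ℝ) ≠ 0 := by positivity
  have hr0 : (r:ℝ) ≠ 0 := by positivity
  have hprim : IsPrimitiveRoot (Complex.exp (2 * ↑Real.pi * I / r)) r :=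
    Complex.isPrimitiveRoot_exp r hr.ne'
  set T := (Finset.range r).filter (fun j => Nat.Coprime j r) with hT
  -- membership facts
  have hmemT : ∀ j ∈ T, j < r ∧ Nat.Coprime j r := by
    intro j hj; rw [hT, Finset.mem_filter, Finset.mem_range] at hj; exact hj
  have hjd : ∀ j : ℕ, Nat.Coprime j r → j * d ≠ r := by
    intro j hc h
    have hjdvd : j ∣ r := ⟨d, h.symm⟩
    have : j ∣ 1 := hc ▸ Nat.dvd_gcd dvd_rfl hjdvd
    have hj1 : j = 1 := Nat.dvd_one.mp this
    rw [hj1, one_mul] at h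
    exact hrd h.symm
  -- reindexing the primitive roots
  have himg : primitiveRoots r ℂ
      = T.image (fun j : ℕ => Complex.exp (2 * ↑Real.pi * I * (↑j / ↑r))) := by
    ext x
    rw [mem_primitiveRoots hr, Complex.isPrimitiveRoot_iff x r hr.ne', Finset.mem_image]
    constructor
    · rintro ⟨i, hi, hic, hx⟩
      exact ⟨i, Finset.mem_filter.mpr ⟨Finset.mem_range.mpr hi, hic⟩, hx⟩
    · rintro ⟨i, hi, hx⟩
      obtain ⟨hi1, hi2⟩ := Finset.mem_filter.mp hi
      exact ⟨i, Finset.mem_range.mp hi1, hi2, hx⟩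
  have hpow : ∀ j : ℕ, Complex.exp (2 * ↑Real.pi * I * (↑j / ↑r))
      = Complex.exp (2 * ↑Real.pi * I / ↑r) ^ j := by
    intro j; rw [← Complex.exp_nat_mul]; congr 1; ring
  have hinj : ∀ a ∈ T, ∀ b ∈ T,
      Complex.exp (2 * ↑Real.pi * I * (↑a / ↑r)) = Complex.exp (2 * ↑Real.pi * I * (↑b / ↑r))
        → a = b := by
    intro a ha b hb hab
    rw [hpow, hpow] at hab
    exact hprim.pow_inj (hmemT a ha).1 (hmemT b hb).1 hab
  -- the evaluation as a product
  have heval : aeval (Complex.exp (((2*Real.pi/d : ℝ):ℂ)*I)) (cyclotomic r ℚ)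
      = ∏ j ∈ T, (((2 * Real.sin (Real.pi/d - Real.pi*j/r) : ℝ):ℂ)
          * Complex.exp (((Real.pi/d + Real.pi*j/r + Real.pi/2 : ℝ):ℂ)*I)) := by
    rw [aeval_def, ← eval_map, map_cyclotomic,
      cyclotomic_eq_prod_X_sub_primitiveRoots hprim, eval_prod, himg,
      Finset.prod_image hinj]
    refine Finset.prod_congr rfl ?_
    intro j _
    rw [eval_sub, eval_X, eval_C]
    have h1 : (2 * (Real.pi:ℂ) * I * (↑j / ↑r)) = ((2*Real.pi*j/r : ℝ):ℂ)*I := by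
      push_cast; ring
    rw [h1, exp_sub_exp,
      show (2*Real.pi/d - 2*Real.pi*j/r)/2 = Real.pi/d - Real.pi*j/r by ring,
      show (2*Real.pi/d + 2*Real.pi*j/r)/2 + Real.pi/2
        = Real.pi/d + Real.pi*j/r + Real.pi/2 by ring]
  -- nonvanishing of the sines
  have hbound : ∀ j ∈ T, -Real.pi < Real.pi/d - Real.pi*j/r
      ∧ Real.pi/d - Real.pi*j/r < Real.pi := by
    intro j hj
    have hjr : (j:ℝ)/r < 1 := (div_lt_one (by positivity)).mpr (by exact_mod_cast (hmemT j hj).1)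
    have hjr0 : 0 ≤ (j:ℝ)/r := by positivity
    have hd2 : (2:ℝ) ≤ d := by exact_mod_cast hd
    have hpd : Real.pi/d ≤ Real.pi/2 := by
      apply div_le_div_of_nonneg_left Real.pi_pos.le (by norm_num) hd2
    have hpd0 : 0 < Real.pi/d := by positivity
    have he : Real.pi*j/r = Real.pi*((j:ℝ)/r) := by ring
    constructor <;> rw [he] <;> nlinarith [Real.pi_pos]
  have hsin_ne : ∀ j ∈ T, Real.sin (Real.pi/d - Real.pi*j/r) ≠ 0 := by
    intro j hj
    rw [ne_eq, Real.sin_eq_zero_iff_of_lt_of_lt (hbound j hj).1 (hbound j hj).2]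
    intro h0
    have : (j:ℝ) * d = r := by
      field_simp at h0
      nlinarith [Real.pi_pos]
    have : j * d = r := by exact_mod_cast this
    exact hjd j (hmemT j hj).2 this
  have hsign : ∀ j ∈ T, (0 < Real.sin (Real.pi/d - Real.pi*j/r) ↔ j * d < r) := by
    intro j hj
    rcases lt_trichotomy (j*d) r with h | h | h
    · simp only [h, iff_true]
      apply Real.sin_pos_of_pos_of_lt_pi _ (hbound j hj).2
      have : (j:ℝ)*d < r := by exact_mod_cast h
      rw [sub_pos, div_lt_div_iff₀ (by positivity) (by positivity)]
      nlinarith [Real.pi_pos]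
    · exact absurd h (hjd j (hmemT j hj).2)
    · simp only [h.asymm, iff_false, not_lt]
      apply le_of_lt
      apply Real.sin_neg_of_neg_of_neg_pi_lt _ (hbound j hj).1
      have : (r:ℝ) < (j:ℝ)*d := by exact_mod_cast h
      rw [sub_neg, div_lt_div_iff₀ (by positivity) (by positivity)]
      nlinarith [Real.pi_pos]
  -- product of nonzero factors
  have hgne : ∀ j ∈ T, (((2 * Real.sin (Real.pi/d - Real.pi*j/r) : ℝ):ℂ)
      * Complex.exp (((Real.pi/d + Real.pi*j/r + Real.pi/2 : ℝ):ℂ)*I)) ≠ 0 := by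
    intro j hj
    exact mul_ne_zero (Complex.ofReal_ne_zero.mpr (by
      have := hsin_ne j hj; intro h; apply this; linarith)) (Complex.exp_ne_zero _)
  obtain ⟨hne, harg⟩ := argAngle_finset_prod T _ hgne
  rw [← heval] at hne harg
  refine ⟨hne, ?_⟩
  rw [harg]
  -- compute each argument
  have hargj : ∀ j ∈ T,
      ((((((2 * Real.sin (Real.pi/d - Real.pi*j/r) : ℝ):ℂ)
        * Complex.exp (((Real.pi/d + Real.pi*j/r + Real.pi/2 : ℝ):ℂ)*I)).arg : ℝ) : Real.Angle))
      = ((Real.pi/d + Real.pi*j/r + Real.pi/2 : ℝ) : Real.Angle)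
        + (if j * d < r then 0 else (Real.pi : Real.Angle)) := by
    intro j hj
    rw [argAngle_real_mul_exp _ (by
      have := hsin_ne j hj; intro h; apply this; linarith)]
    congr 1
    have h2 : (0 < 2 * Real.sin (Real.pi/d - Real.pi*j/r))
        ↔ (0 < Real.sin (Real.pi/d - Real.pi*j/r)) := by constructor <;> intro <;> linarith
    rw [if_congr (h2.trans (hsign j hj)) rfl rfl]
  rw [Finset.sum_congr rfl hargj, Finset.sum_add_distrib]
  -- split the sums
  set N := (T.filter (fun j => ¬ j * d < r)).card with hN
  set P := (T.filter (fun j => j * d < r)).card with hP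
  have hite : ∑ j ∈ T, (if j * d < r then (0:Real.Angle) else (Real.pi : Real.Angle))
      = (N • (Real.pi : Real.Angle)) := by
    rw [Finset.sum_ite, Finset.sum_const, Finset.sum_const, hN]
    simp
  have hcoe : ∑ j ∈ T, ((Real.pi/d + Real.pi*j/r + Real.pi/2 : ℝ) : Real.Angle)
      = ((∑ j ∈ T, (Real.pi/d + Real.pi*j/r + Real.pi/2) : ℝ) : Real.Angle) := by
    rw [← Real.Angle.coe_coeHom, ← map_sum]
  have hnsmul : (N • (Real.pi : Real.Angle)) = (((N : ℝ) * Real.pi : ℝ) : Real.Angle) := by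
    rw [← Real.Angle.coe_coeHom, ← map_nsmul, Real.Angle.coe_coeHom, nsmul_eq_mul]
  rw [hite, hcoe, hnsmul, ← Real.Angle.coe_add, Real.Angle.angle_eq_iff_two_pi_dvd_sub]
  -- now a real-number identity
  have hPN : P + N = Nat.totient r := by
    rw [hP, hN, Finset.card_filter_add_card_filter_not, hT]
    rw [Nat.totient_eq_card_coprime]
    congr 1
    apply Finset.filter_congr
    intro x _
    simp [Nat.coprime_comm]
  rcases eq_or_lt_of_le (Nat.succ_le_of_lt hr) with h1 | hr2
  · -- r = 1
    have hr1 : r = 1 := h1.symm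
    subst hr1
    have hT1 : T = {0} := by rw [hT]; decide
    have hN0 : N = 0 := by
      rw [hN, hT1, Finset.filter_singleton]
      simp
    refine ⟨0, ?_⟩
    rw [hT1, hN0]
    simp only [Finset.sum_singleton, Nat.cast_zero, Nat.cast_one, Nat.totient_one,
      phiD, if_pos rfl]
    push_cast
    field_simp
    ring
  · -- r ≥ 2
    have hr2' : 2 ≤ r := hr2
    have hphiD : phiD d r = (P : ℚ) := by
      rw [phiD, if_neg (by omega)]
      norm_cast
      rw [hP, hT]
      congr 1
      ext j
      simp only [Finset.mem_filter, Finset.mem_range, Finset.mem_Icc]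
      constructor
      · rintro ⟨⟨hj1, hjdiv⟩, hjc⟩
        have hjdr : j * d ≤ r := (Nat.le_div_iff_mul_le (by omega : 0 < d)).mp hjdiv
        have hlt : j * d < r := lt_of_le_of_ne hjdr (hjd j hjc)
        have hjr : j < r := lt_of_le_of_lt (Nat.le_mul_of_pos_right j (by omega)) hlt
        exact ⟨⟨hjr, hjc⟩, hlt⟩
      · rintro ⟨⟨hjr, hjc⟩, hlt⟩
        refine ⟨⟨?_, (Nat.le_div_iff_mul_le (by omega : 0 < d)).mpr hlt.le⟩, hjc⟩
        rcases Nat.eq_zero_or_pos j with rfl | h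
        · exfalso; rw [Nat.Coprime, Nat.gcd_zero_left] at hjc; omega
        · exact h
    -- the sum of the angles
    have hS : ((∑ j ∈ T, j : ℕ) : ℝ) = r * Nat.totient r / 2 := by
      have := gauss_sum hr2'
      rw [← hT] at this
      have := congrArg (Nat.cast : ℕ → ℝ) this
      push_cast at this ⊢
      linarith
    have hsum : ∑ j ∈ T, (Real.pi/d + Real.pi*j/r + Real.pi/2)
        = Nat.totient r * (Real.pi/d) + Nat.totient r * Real.pi := by
      rw [Finset.sum_add_distrib, Finset.sum_add_distrib, Finset.sum_const, Finset.sum_const]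
      have hc : T.card = Nat.totient r := by
        rw [hT, Nat.totient_eq_card_coprime]
        congr 1
        apply Finset.filter_congr
        intro x _
        simp [Nat.coprime_comm]
      have h3 : ∑ j ∈ T, Real.pi*(j:ℝ)/r = (Real.pi/r) * ((∑ j ∈ T, j : ℕ) : ℝ) := by
        rw [Nat.cast_sum, Finset.mul_sum]
        refine Finset.sum_congr rfl ?_
        intro j _; ring
      rw [h3, hS, hc, nsmul_eq_mul, nsmul_eq_mul]
      field_simp
      ring
    rw [hsum, hphiD]
    refine ⟨N, ?_⟩
    have hPNr : (Nat.totient r : ℝ) = (P : ℝ) + (N : ℝ) := by exact_mod_cast hPN.symm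
    push_cast
    rw [hPNr]
    field_simp
    ring

lemma angle_sum_multiset (L : Multiset ℕ) (g : ℕ → ℚ) (d : ℕ) :
    (L.map (fun r => ((((g r : ℚ) : ℝ) * Real.pi / d : ℝ) : Real.Angle))).sum
      = (((((L.map g).sum : ℚ) : ℝ) * Real.pi / d : ℝ) : Real.Angle) := by
  induction L using Multiset.induction_on with
  | empty => simp
  | cons x M ih =>
      rw [Multiset.map_cons, Multiset.sum_cons, Multiset.map_cons, Multiset.sum_cons, ih,
        ← Real.Angle.coe_add]
      congr 1
      push_cast
      ring

end ArgCycAux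

open ArgCycAux Complex in
/-- Let `d ≥ 2` and `ζ = exp(2πi/d)`. Let `f ∈ ℚ[q]` be a nonzero polynomial which is a
product of a positive rational constant, a power of `q`, and cyclotomic polynomials, such
that `Φ_d` does not divide `f`. Then `f(ζ) ≠ 0` and the complex argument of `f(ζ)` is
congruent to `B_d(f)·π/d` modulo `2π`. -/
theorem arg_cycProduct_at_zeta (d : ℕ) (hd : 2 ≤ d) (f : Polynomial ℚ)
    (hf : IsPosCycProduct f) (hfd : ¬ cyclotomic d ℚ ∣ f) :
    aeval (Complex.exp (2 * Real.pi * Complex.I / d)) f ≠ 0 ∧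
    ∃ k : ℤ,
      Complex.arg (aeval (Complex.exp (2 * Real.pi * Complex.I / d)) f)
        = (Bd d f : ℝ) * Real.pi / d + 2 * Real.pi * k := by
  obtain ⟨c, a, L, hc, hL, rfl⟩ := hf
  set P := (L.map fun r => cyclotomic r ℚ).prod with hP
  set f := C c * X ^ a * P with hf'
  have hd0 : (d:ℝ) ≠ 0 := by positivity
  have hdL : d ∉ L := by
    intro h
    exact hfd ((Multiset.dvd_prod (Multiset.mem_map_of_mem _ h)).mul_left _)
  have hζeq : Complex.exp (2 * ↑Real.pi * Complex.I / d)
      = Complex.exp (((2*Real.pi/d : ℝ):ℂ)*I) := by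
    congr 1
    push_cast
    ring
  rw [hζeq]
  set ζ := Complex.exp (((2*Real.pi/d : ℝ):ℂ)*I) with hζ
  -- decompose the evaluation
  have hsplit : aeval ζ f = (algebraMap ℚ ℂ c) * ζ^a
      * (L.map (fun r => aeval ζ (cyclotomic r ℚ))).prod := by
    rw [hf', map_mul, map_mul, aeval_C, map_pow, aeval_X, hP, map_multiset_prod,
      Multiset.map_map]
    rfl
  -- facts about the factors
  have hfact : ∀ r ∈ L, aeval ζ (cyclotomic r ℚ) ≠ 0 ∧
      ((aeval ζ (cyclotomic r ℚ)).arg : Real.Angle)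
        = ((((Nat.totient r : ℚ) + d * phiD d r : ℚ) : ℝ) * Real.pi / d : ℝ) := by
    intro r hr
    exact cyclo_arg hd (hL r hr) (fun h => hdL (h ▸ hr))
  -- nonvanishing
  have hcC : algebraMap ℚ ℂ c ≠ 0 := by
    simp only [eq_ratCast, ne_eq, Rat.cast_eq_zero]
    exact hc.ne'
  have hζa : ζ^a ≠ 0 := pow_ne_zero _ (Complex.exp_ne_zero _)
  obtain ⟨hprodne, hprodarg⟩ := argAngle_multiset_prod (L.map (fun r => aeval ζ (cyclotomic r ℚ)))
    (by intro z hz; obtain ⟨r, hr, rfl⟩ := Multiset.mem_map.mp hz; exact (hfact r hr).1)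
  have hne : aeval ζ f ≠ 0 := by
    rw [hsplit]
    exact mul_ne_zero (mul_ne_zero hcC hζa) hprodne
  refine ⟨hne, ?_⟩
  -- argument computation
  have hargc : ((algebraMap ℚ ℂ c).arg : Real.Angle) = ((0:ℝ) : Real.Angle) := by
    rw [eq_ratCast, show ((c:ℂ)) = (((c:ℝ)):ℂ) by push_cast; rfl,
      Complex.arg_ofReal_of_nonneg (by positivity)]
  have hargwa : ((ζ^a).arg : Real.Angle) = ((a * (2*Real.pi/d) : ℝ) : Real.Angle) := by
    rw [hζ, ← Complex.exp_nat_mul,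
      show (a:ℂ) * (((2*Real.pi/d : ℝ):ℂ)*I) = ((a * (2*Real.pi/d) : ℝ):ℂ)*I by push_cast; ring,
      argAngle_exp]
  have hargtotal : ((aeval ζ f).arg : Real.Angle)
      = ((0:ℝ) : Real.Angle) + ((a * (2*Real.pi/d) : ℝ) : Real.Angle)
        + (L.map (fun r =>
            (((((Nat.totient r : ℚ) + d * phiD d r : ℚ) : ℝ) * Real.pi / d : ℝ) : Real.Angle))).sum := by
    rw [hsplit, Complex.arg_mul_coe_angle (mul_ne_zero hcC hζa) hprodne,
      Complex.arg_mul_coe_angle hcC hζa, hargc, hargwa, hprodarg, Multiset.map_map]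
    congr 1
    congr 1
    refine Multiset.map_congr rfl ?_
    intro r hr
    exact (hfact r hr).2
  -- turn the multiset sum of angles into an angle of a real sum
  set wq : ℕ → ℚ := fun r => (Nat.totient r : ℚ) + d * phiD d r with hwq
  have hsum1 : (L.map (fun r =>
        ((((wq r : ℚ) : ℝ) * Real.pi / d : ℝ) : Real.Angle))).sum
      = ((((L.map wq).sum : ℚ) : ℝ) * Real.pi / d : ℝ) := angle_sum_multiset L wq d
  -- Bd identity
  have hfne : f ≠ 0 := by
    rw [hf']
    refine mul_ne_zero (mul_ne_zero ?_ (pow_ne_zero _ X_ne_zero)) ?_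
    · simpa using hc.ne'
    · rw [hP, ne_eq, Multiset.prod_eq_zero_iff]
      intro h
      obtain ⟨r, _, hre⟩ := Multiset.mem_map.mp h
      exact cyclotomic_ne_zero r ℚ hre
  have hmemIcc : ∀ r ∈ L, r ∈ Finset.Icc 1 (2 * f.natDegree ^ 2 + 1) := by
    intro r hr
    rw [Finset.mem_Icc]
    refine ⟨hL r hr, ?_⟩
    have hdvd : cyclotomic r ℚ ∣ f :=
      (Multiset.dvd_prod (Multiset.mem_map_of_mem _ hr)).mul_left _
    have h1 : (cyclotomic r ℚ).natDegree ≤ f.natDegree := natDegree_le_of_dvd hdvd hfne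
    rw [natDegree_cyclotomic] at h1
    calc r ≤ 2 * (Nat.totient r)^2 := totient_sq r
      _ ≤ 2 * f.natDegree^2 := by
          have := Nat.pow_le_pow_left h1 2
          omega
      _ ≤ 2 * f.natDegree^2 + 1 := by omega
  have hBd : Bd d f = 2 * (a:ℚ) + (L.map wq).sum := by
    rw [Bd, hf', mult_X hc.ne' hL, ← hf']
    congr 1
    have hmult : ∀ r ∈ Finset.Icc 1 (2 * f.natDegree ^ 2 + 1),
        (multiplicity (cyclotomic r ℚ) f : ℚ) * ((Nat.totient r : ℚ) + d * phiD d r)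
          = (L.count r : ℚ) * wq r := by
      intro r hrm
      rw [Finset.mem_Icc] at hrm
      rw [hf', mult_cyclo hc.ne' hL (by omega : 0 < r), hwq]
    rw [Finset.sum_congr rfl hmult]
    rw [Finset.sum_multiset_map_count]
    rw [Finset.sum_subset (fun r hr => hmemIcc r (Multiset.mem_toFinset.mp hr))]
    · refine Finset.sum_congr rfl ?_
      intro r _
      rw [nsmul_eq_mul]
    · intro r _ hrn
      rw [Multiset.count_eq_zero_of_notMem (fun h => hrn (Multiset.mem_toFinset.mpr h))]
      simp
  -- final real identity
  have hreal : (0:ℝ) + (a * (2*Real.pi/d)) + (((L.map wq).sum : ℚ) : ℝ) * Real.pi / d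
      = (Bd d f : ℝ) * Real.pi / d := by
    rw [hBd]
    push_cast
    ring
  have hAngle : ((aeval ζ f).arg : Real.Angle)
      = (((Bd d f : ℝ) * Real.pi / d : ℝ) : Real.Angle) := by
    rw [hargtotal, hsum1, ← Real.Angle.coe_add, ← Real.Angle.coe_add, hreal]
  obtain ⟨k, hk⟩ := Real.Angle.angle_eq_iff_two_pi_dvd_sub.mp hAngle
  refine ⟨k, ?_⟩
  linarith
end

section
/- Let d ≥ 2 be an integer and ζ = exp(2πi/d). Let f, g ∈ ℚ[q] each be a product of a positive rational constant, a power of q, and cyclotomic polynomials, with Φ_d dividing neither f nor g. If f(ζ)/g(ζ) is a real number, then (B_d(f) − B_d(g))/d is an integer; moreover this integer is even if f(ζ)/g(ζ) > 0 and odd if f(ζ)/g(ζ) < 0. -/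
open Polynomial

open Complex Finset

private lemma totient_sq_of_odd : ∀ n : ℕ, ¬ 2 ∣ n → n ≤ n.totient ^ 2 := by
  refine Nat.recOnPrimePow (fun h => by omega) (fun _ => by simp) ?_
  intro a p n hp hpa hn ih h2
  have hpodd : p ≠ 2 := by
    rintro rfl
    exact h2 (Dvd.dvd.mul_right (dvd_pow_self 2 hn.ne') a)
  have ha2 : ¬ 2 ∣ a := fun h => h2 (h.mul_left _)
  have hcop : Nat.Coprime (p ^ n) a := Nat.Coprime.pow_left _ (hp.coprime_iff_not_dvd.2 hpa)
  rw [Nat.totient_mul hcop, Nat.totient_prime_pow hp hn, mul_pow]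
  have h3 : 3 ≤ p := by have := hp.two_le; omega
  obtain ⟨q, rfl⟩ : ∃ q, p = q + 1 := ⟨p - 1, by omega⟩
  have hq : q + 1 - 1 = q := by omega
  rw [hq]
  have key : (q+1) ^ n ≤ ((q+1) ^ (n - 1) * q) ^ 2 := by
    have hpow : 1 ≤ (q+1) ^ (n-1) := Nat.one_le_iff_ne_zero.2 (pow_ne_zero _ (by omega))
    have h1 : q + 1 ≤ q ^ 2 := by nlinarith
    calc (q+1) ^ n = (q+1) ^ (n - 1) * (q+1) := by
          rw [← pow_succ]; congr 1; omega
      _ ≤ (q+1) ^ (n-1) * ((q+1) ^ (n-1) * q^2) :=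
          Nat.mul_le_mul_left _ (h1.trans (Nat.le_mul_of_pos_left _ (by omega)))
      _ = ((q+1) ^ (n - 1) * q) ^ 2 := by ring
  exact Nat.mul_le_mul key (ih ha2)

private lemma le_two_mul_totient_sq (n : ℕ) (hn : n ≠ 0) : n ≤ 2 * n.totient ^ 2 := by
  set k := n.factorization 2 with hk
  have hdecomp : 2 ^ k * (n / 2 ^ k) = n := Nat.ordProj_mul_ordCompl_eq_self n 2
  have hodd : ¬ 2 ∣ (n / 2 ^ k) := Nat.not_dvd_ordCompl (by norm_num) hn
  have hm := totient_sq_of_odd _ hodd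
  have hcop : Nat.Coprime (2 ^ k) (n / 2 ^ k) :=
    Nat.Coprime.pow_left _ ((Nat.prime_two.coprime_iff_not_dvd).2 hodd)
  rcases Nat.eq_zero_or_pos k with h0 | hkpos
  · have he : n / 2 ^ k = n := by rw [h0]; simp
    rw [he] at hm
    omega
  · rw [← hdecomp, Nat.totient_mul hcop, Nat.totient_prime_pow Nat.prime_two hkpos]
    have e1 : (2:ℕ) - 1 = 1 := rfl
    rw [e1, mul_one]
    have h1 : 2 ^ k ≤ 2 * (2 ^ (k-1)) ^ 2 := by
      have : 2 * (2 ^ (k-1) : ℕ) ^ 2 = 2 ^ (2*k - 1) := by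
        rw [← pow_mul, ← pow_succ']; congr 1; omega
      rw [this]
      exact Nat.pow_le_pow_right (by norm_num) (by omega)
    calc 2 ^ k * (n / 2 ^ k) ≤ (2 * (2 ^ (k-1)) ^ 2) * ((n / 2^k).totient ^2) :=
          Nat.mul_le_mul h1 hm
      _ = 2 * (2 ^ (k - 1) * (n / 2 ^ k).totient) ^ 2 := by ring

open Finset Complex

/-- `z` has argument `π t` (mod `2π`) with positive modulus. -/
def PF (z : ℂ) (t : ℚ) : Prop :=
  ∃ ρ : ℝ, 0 < ρ ∧ z = (ρ : ℂ) * Complex.exp ((Real.pi * (t : ℝ) : ℝ) * Complex.I)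

lemma PF_mul {z w : ℂ} {s t : ℚ} (hz : PF z s) (hw : PF w t) : PF (z * w) (s + t) := by
  obtain ⟨ρ, hρ, rfl⟩ := hz
  obtain ⟨σ, hσ, rfl⟩ := hw
  refine ⟨ρ * σ, mul_pos hρ hσ, ?_⟩
  rw [show ((Real.pi * ((s+t : ℚ) : ℝ) : ℝ) * Complex.I : ℂ)
      = (Real.pi * (s:ℝ) : ℝ) * Complex.I + (Real.pi * (t:ℝ) : ℝ) * Complex.I by push_cast; ring,
    Complex.exp_add]
  push_cast
  ring

lemma PF_congr {z : ℂ} {s t : ℚ} (hz : PF z s) (k : ℤ) (hk : t = s + 2 * k) : PF z t := by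
  obtain ⟨ρ, hρ, rfl⟩ := hz
  refine ⟨ρ, hρ, ?_⟩
  have : (↑(Real.pi * (t : ℝ)) * Complex.I : ℂ)
      = ↑(Real.pi * (s : ℝ)) * Complex.I + (k : ℂ) * (2 * Real.pi * Complex.I) := by
    rw [hk]; push_cast; ring
  rw [this, Complex.exp_add, Complex.exp_int_mul_two_pi_mul_I, mul_one]

lemma PF_exp (t : ℚ) : PF (Complex.exp ((Real.pi * (t : ℝ) : ℝ) * Complex.I)) t :=
  ⟨1, one_pos, by simp⟩

lemma PF_real {c : ℝ} (hc : 0 < c) : PF (c : ℂ) 0 := ⟨c, hc, by simp⟩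

lemma two_sin_aux (z : ℂ) : Complex.exp (z * I) - Complex.exp (-z * I) = 2 * Complex.sin z * I := by
  rw [Complex.sin]
  have h := Complex.I_sq
  field_simp
  ring_nf
  rw [Complex.I_sq]
  ring

lemma exp_sub_exp (α β : ℝ) :
    Complex.exp (↑α * I) - Complex.exp (↑β * I)
      = ↑(2 * Real.sin ((α - β) / 2)) * Complex.exp (↑((α + β) / 2 + Real.pi / 2) * I) := by
  have hI : Complex.exp (↑(Real.pi / 2) * I) = I := by
    rw [Complex.exp_mul_I]
    push_cast
    simp
  have key : Complex.exp (↑α * I) - Complex.exp (↑β * I)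
      = Complex.exp (↑((α + β) / 2) * I) *
        (Complex.exp ((↑((α - β) / 2) : ℂ) * I) - Complex.exp (-(↑((α - β) / 2) : ℂ) * I)) := by
    rw [mul_sub, ← Complex.exp_add, ← Complex.exp_add]
    push_cast
    ring_nf
  rw [key, two_sin_aux]
  rw [← Complex.ofReal_sin]
  push_cast
  rw [show ((((α:ℂ) + β) / 2 + ↑Real.pi / 2) * I : ℂ)
      = ((α:ℂ)+β)/2 * I + (↑(Real.pi/2) : ℂ) * I by push_cast; ring, Complex.exp_add, hI]
  ring

lemma PF_factor {d r j : ℕ} (hd : 2 ≤ d) (hr : 1 ≤ r) (hrd : r ≠ d) (hj : j < r)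
    (hcop : j.Coprime r) :
    PF (Complex.exp ((2 * Real.pi / d : ℝ) * Complex.I)
        - Complex.exp ((2 * Real.pi * j / r : ℝ) * Complex.I))
      (1/d + j/r + 1/2 + if r < j * d then 1 else 0) := by
  have hd0 : (0:ℝ) < d := by positivity
  have hr0 : (0:ℝ) < r := by exact_mod_cast hr
  have hπ := Real.pi_pos
  have hne : j * d ≠ r := by
    intro h
    have hjr : j ∣ r := ⟨d, h.symm⟩
    have hj1 : j = 1 := Nat.eq_one_of_dvd_one (hcop ▸ Nat.dvd_gcd dvd_rfl hjr)
    rw [hj1, one_mul] at h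
    exact hrd h.symm
  rw [exp_sub_exp]
  set θ : ℝ := (2 * Real.pi / d - 2 * Real.pi * j / r) / 2 with hθ
  set u : ℝ := (2 * Real.pi / d + 2 * Real.pi * j / r) / 2 + Real.pi / 2 with hu
  have hθeq : θ = Real.pi * ((1:ℝ)/d - j/r) := by rw [hθ]; ring
  rcases lt_or_gt_of_ne hne with hlt | hgt
  · -- j*d < r : sin θ > 0
    rw [if_neg (by omega : ¬ r < j * d)]
    have hX1 : (0:ℝ) < 1/d - j/r := by
      rw [sub_pos, div_lt_div_iff₀ hr0 hd0, one_mul]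
      exact_mod_cast hlt
    have hX2 : (1:ℝ)/d - j/r < 1 := by
      have h1 : (1:ℝ)/d ≤ 1/2 := by
        rw [div_le_div_iff₀ hd0 (by norm_num)]
        exact_mod_cast by omega
      have h2 : (0:ℝ) ≤ (j:ℝ)/r := by positivity
      linarith
    have hs : 0 < Real.sin θ := by
      rw [hθeq]
      exact Real.sin_pos_of_pos_of_lt_pi (by nlinarith) (by nlinarith)
    refine ⟨2 * Real.sin θ, by linarith, ?_⟩
    congr 2
    rw [hu]
    push_cast
    ring
  · -- r < j*d : sin θ < 0
    rw [if_pos (by omega : r < j * d)]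
    have hX1 : (0:ℝ) < (j:ℝ)/r - 1/d := by
      rw [sub_pos, div_lt_div_iff₀ hd0 hr0, one_mul]
      exact_mod_cast hgt
    have hX2 : (j:ℝ)/r - 1/d < 1 := by
      have h1 : (j:ℝ)/r < 1 := by
        rw [div_lt_one hr0]; exact_mod_cast hj
      have h2 : (0:ℝ) < 1/d := by positivity
      linarith
    have hs : Real.sin θ < 0 := by
      have hpos : 0 < Real.sin (Real.pi * ((j:ℝ)/r - 1/d)) :=
        Real.sin_pos_of_pos_of_lt_pi (by nlinarith) (by nlinarith)
      rw [hθeq, show Real.pi * ((1:ℝ)/d - j/r) = -(Real.pi * ((j:ℝ)/r - 1/d)) by ring,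
        Real.sin_neg]
      linarith
    refine ⟨-(2 * Real.sin θ), by linarith, ?_⟩
    have harg : (Real.pi * ((1/(d:ℚ) + j/r + 1/2 + 1 : ℚ) : ℝ) : ℝ) * Complex.I
        = (u : ℂ) * Complex.I + (Real.pi : ℂ) * Complex.I := by
      rw [hu]; push_cast; ring
    rw [harg, Complex.exp_add, Complex.exp_pi_mul_I]
    push_cast
    ring

/-- The coprime residues mod `r`. -/
def copF (r : ℕ) : Finset ℕ := (Finset.range r).filter (fun j => j.Coprime r)

lemma card_copF (r : ℕ) : (copF r).card = r.totient := by
  rw [Nat.totient_eq_card_coprime, copF]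
  congr 1
  apply Finset.filter_congr
  intro j _
  simp [Nat.Coprime, Nat.coprime_comm (m := j)]

lemma mem_copF {r j : ℕ} : j ∈ copF r ↔ j < r ∧ j.Coprime r := by
  simp [copF]

lemma copF_pos {r j : ℕ} (hr : 2 ≤ r) (hj : j ∈ copF r) : 1 ≤ j := by
  rcases Nat.eq_zero_or_pos j with rfl | h
  · exfalso
    have := (mem_copF.1 hj).2
    simp [Nat.Coprime] at this
    omega
  · exact h

lemma sum_copF (r : ℕ) (hr : 2 ≤ r) : 2 * ∑ j ∈ copF r, j = r * r.totient := by
  have h2 : ∑ j ∈ copF r, j = ∑ j ∈ copF r, (r - j) := by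
    refine Finset.sum_nbij' (fun j => r - j) (fun j => r - j) ?_ ?_ ?_ ?_ ?_
    · intro a ha
      obtain ⟨hlt, hcop⟩ := mem_copF.1 ha
      have h1 := copF_pos hr ha
      show r - a ∈ copF r
      refine mem_copF.2 ⟨by omega, ?_⟩
      exact (Nat.coprime_self_sub_left hlt.le).2 hcop
    · intro a ha
      obtain ⟨hlt, hcop⟩ := mem_copF.1 ha
      have h1 := copF_pos hr ha
      show r - a ∈ copF r
      refine mem_copF.2 ⟨by omega, ?_⟩
      exact (Nat.coprime_self_sub_left hlt.le).2 hcop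
    · intro a ha
      have h1 := (mem_copF.1 ha).1
      have h2 := copF_pos hr ha
      show r - (r - a) = a
      omega
    · intro a ha
      have h1 := (mem_copF.1 ha).1
      have h2 := copF_pos hr ha
      show r - (r - a) = a
      omega
    · intro a ha
      have h1 := (mem_copF.1 ha).1
      show a = r - (r - a)
      omega
  have h3 : ∑ j ∈ copF r, j + ∑ j ∈ copF r, (r - j) = ∑ j ∈ copF r, r := by
    rw [← Finset.sum_add_distrib]
    refine Finset.sum_congr rfl fun j hj => ?_
    have := (mem_copF.1 hj).1
    omega
  rw [Finset.sum_const, card_copF, smul_eq_mul] at h3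
  rw [← h2] at h3
  rw [mul_comm]
  linarith

/-- The sum of the per-factor exponents equals the target mod 2. -/
lemma sum_tj (d r : ℕ) (hd : 2 ≤ d) (hr : 1 ≤ r) (hrd : r ≠ d) :
    ∃ k : ℤ, ((r.totient : ℚ) + d * phiD d r) / d
      = (∑ j ∈ copF r, ((1:ℚ)/d + j/r + 1/2 + if r < j * d then 1 else 0)) + 2 * k := by
  have hd0 : (d:ℚ) ≠ 0 := by positivity
  rcases eq_or_lt_of_le hr with h1 | h2
  · -- r = 1
    refine ⟨0, ?_⟩
    rw [← h1]
    have hc : copF 1 = {0} := by decide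
    rw [phiD, if_pos rfl, hc]
    have : ¬ (1:ℕ) < 0 * d := by omega
    simp only [Finset.sum_singleton, if_neg this, Nat.totient_one]
    push_cast
    rw [div_eq_iff hd0]
    field_simp
    ring
  · -- r ≥ 2
    have hr2 : 2 ≤ r := h2
    have hr0 : (r:ℚ) ≠ 0 := by positivity
    -- no j in copF r with j * d = r
    have hne : ∀ j ∈ copF r, j * d ≠ r := by
      intro j hj h
      obtain ⟨hlt, hcop⟩ := mem_copF.1 hj
      have hjr : j ∣ r := ⟨d, h.symm⟩
      have hj1 : j = 1 := Nat.eq_one_of_dvd_one (hcop ▸ Nat.dvd_gcd dvd_rfl hjr)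
      rw [hj1, one_mul] at h
      exact hrd h.symm
    -- the complement filter is the phiD set
    have hBset : (copF r).filter (fun j => ¬ r < j * d)
        = (Finset.Icc 1 (r / d)).filter (fun j => Nat.gcd j r = 1) := by
      ext j
      simp only [Finset.mem_filter, mem_copF, Finset.mem_Icc, not_lt]
      constructor
      · rintro ⟨⟨hlt, hcop⟩, hle⟩
        have h1 : 1 ≤ j := copF_pos hr2 (mem_copF.2 ⟨hlt, hcop⟩)
        exact ⟨⟨h1, (Nat.le_div_iff_mul_le (by omega)).2 hle⟩, hcop⟩
      · rintro ⟨⟨h1, hle⟩, hcop⟩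
        have hjd : j * d ≤ r := (Nat.le_div_iff_mul_le (by omega)).1 hle
        have hne' : j * d ≠ r := by
          intro h
          have hjr : j ∣ r := ⟨d, h.symm⟩
          have hj1 : j = 1 := Nat.eq_one_of_dvd_one (hcop ▸ Nat.dvd_gcd dvd_rfl hjr)
          rw [hj1, one_mul] at h
          exact hrd h.symm
        have hjlt : j < r := by nlinarith
        exact ⟨⟨hjlt, hcop⟩, hjd⟩
    set A := (copF r).filter (fun j => r < j * d) with hA
    set B := (copF r).filter (fun j => ¬ r < j * d) with hB
    have hcards : A.card + B.card = r.totient := by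
      rw [hA, hB, Finset.card_filter_add_card_filter_not, card_copF]
    have hphiD : phiD d r = (B.card : ℚ) := by
      rw [phiD, if_neg (by omega), hBset]
    -- split the sum
    have hsplit : (∑ j ∈ copF r, ((1:ℚ)/d + j/r + 1/2 + if r < j * d then 1 else 0))
        = (r.totient : ℚ) * (1/d) + (∑ j ∈ copF r, (j:ℚ))/r + (r.totient : ℚ) * (1/2)
          + (A.card : ℚ) := by
      rw [Finset.sum_add_distrib, Finset.sum_add_distrib, Finset.sum_add_distrib,
        Finset.sum_boole, Finset.sum_div, ← hA]
      simp only [Finset.sum_const, card_copF, nsmul_eq_mul]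
    have hsum : 2 * ∑ j ∈ copF r, (j:ℚ) = r * r.totient := by
      have h := sum_copF r hr2
      have h' : ((2 * ∑ j ∈ copF r, j : ℕ) : ℚ) = ((r * r.totient : ℕ) : ℚ) := by rw [h]
      push_cast at h'
      exact h'
    refine ⟨(B.card : ℤ) - (r.totient : ℤ), ?_⟩
    rw [hsplit, hphiD]
    have hAcard : (A.card : ℚ) = (r.totient : ℚ) - B.card := by
      have : (A.card : ℚ) + B.card = r.totient := by exact_mod_cast hcards
      linarith
    rw [hAcard]
    have hsj : (∑ j ∈ copF r, (j:ℚ))/r = (r.totient : ℚ)/2 := by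
      rw [eq_div_iff (by norm_num : (2:ℚ) ≠ 0)]
      field_simp
      linarith [hsum]
    rw [hsj]
    push_cast
    field_simp
    ring

lemma PF_one : PF 1 0 := ⟨1, one_pos, by simp⟩

lemma PF_prod {α : Type*} [DecidableEq α] (F : Finset α) (f : α → ℂ) (t : α → ℚ)
    (h : ∀ a ∈ F, PF (f a) (t a)) : PF (∏ a ∈ F, f a) (∑ a ∈ F, t a) := by
  induction F using Finset.induction with
  | empty => simpa using PF_one
  | insert _ _ hx ih =>
    rw [Finset.prod_insert hx, Finset.sum_insert hx]
    exact PF_mul (h _ (Finset.mem_insert_self _ _))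
      (ih fun a ha => h a (Finset.mem_insert_of_mem ha))

lemma PF_cyclotomic {d r : ℕ} (hd : 2 ≤ d) (hr : 1 ≤ r) (hrd : r ≠ d) :
    PF ((Polynomial.aeval (Complex.exp ((2 * Real.pi / d : ℝ) * Complex.I)))
        (Polynomial.cyclotomic r ℚ))
      (((r.totient : ℚ) + d * phiD d r) / d) := by
  have hr0 : r ≠ 0 := by omega
  haveI : NeZero r := ⟨hr0⟩
  set μ : ℂ := Complex.exp ((2 * Real.pi / r : ℝ) * Complex.I) with hμ
  have hprim : IsPrimitiveRoot μ r := by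
    have h := Complex.isPrimitiveRoot_exp r hr0
    convert h using 2
    push_cast
    ring
  have heval : (Polynomial.aeval (Complex.exp ((2 * Real.pi / d : ℝ) * Complex.I)))
        (Polynomial.cyclotomic r ℚ)
      = ∏ j ∈ copF r, (Complex.exp ((2 * Real.pi / d : ℝ) * Complex.I)
          - Complex.exp ((2 * Real.pi * j / r : ℝ) * Complex.I)) := by
    rw [Polynomial.aeval_def, Polynomial.eval₂_eq_eval_map, Polynomial.map_cyclotomic,
      Polynomial.cyclotomic_eq_prod_X_sub_primitiveRoots hprim, Polynomial.eval_prod]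
    have himg : primitiveRoots r ℂ = (copF r).image (fun j => μ ^ j) := by
      ext x
      rw [mem_primitiveRoots (by omega : 0 < r), hprim.isPrimitiveRoot_iff]
      simp only [Finset.mem_image, mem_copF]
      constructor
      · rintro ⟨i, hi, hcop, rfl⟩; exact ⟨i, ⟨hi, hcop⟩, rfl⟩
      · rintro ⟨i, ⟨hi, hcop⟩, rfl⟩; exact ⟨i, hi, hcop, rfl⟩
    rw [himg, Finset.prod_image (fun a ha b hb hab =>
      hprim.pow_inj (mem_copF.1 ha).1 (mem_copF.1 hb).1 hab)]
    refine Finset.prod_congr rfl fun j hj => ?_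
    simp only [Polynomial.eval_sub, Polynomial.eval_X, Polynomial.eval_C]
    congr 1
    rw [hμ, ← Complex.exp_nat_mul]
    congr 1
    push_cast
    ring
  rw [heval]
  obtain ⟨k, hk⟩ := sum_tj d r hd hr hrd
  refine PF_congr (PF_prod _ _ _ fun j hj => ?_) k hk
  exact PF_factor hd hr hrd (mem_copF.1 hj).1 (mem_copF.1 hj).2

lemma cyc_prime {s : ℕ} (hs : 0 < s) : Prime (cyclotomic s ℚ) :=
  UniqueFactorizationMonoid.irreducible_iff_prime.mp (cyclotomic.irreducible_rat hs)

lemma cyc_eval_zero_ne {r : ℕ} (hr : 0 < r) : Polynomial.eval 0 (cyclotomic r ℚ) ≠ 0 := by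
  rcases Nat.lt_or_ge r 2 with h2 | h2
  · have h1 : r = 1 := by omega
    subst h1
    simp [cyclotomic_one]
  · rw [← Polynomial.coeff_zero_eq_eval_zero, cyclotomic_coeff_zero ℚ h2]
    exact one_ne_zero

lemma cyc_not_dvd_cyc {s r : ℕ} (hs : 0 < s) (hr : 0 < r) (hne : s ≠ r) :
    ¬ cyclotomic s ℚ ∣ cyclotomic r ℚ := by
  intro h
  have ha := (cyclotomic.irreducible_rat hs).associated_of_dvd (cyclotomic.irreducible_rat hr) h
  have := Polynomial.eq_of_monic_of_associated (cyclotomic.monic s ℚ) (cyclotomic.monic r ℚ) ha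
  exact hne (cyclotomic_injective this)

lemma cyc_not_dvd_X {s : ℕ} (hs : 0 < s) : ¬ cyclotomic s ℚ ∣ (X : ℚ[X]) := by
  intro h
  have ha := (cyclotomic.irreducible_rat hs).associated_of_dvd irreducible_X h
  have heq := Polynomial.eq_of_monic_of_associated (cyclotomic.monic s ℚ) monic_X ha
  have := cyc_eval_zero_ne hs
  rw [heq] at this
  simp at this

lemma cyc_not_dvd_C {s : ℕ} (hs : 0 < s) {c : ℚ} (hc : c ≠ 0) :
    ¬ cyclotomic s ℚ ∣ Polynomial.C c := by
  intro h
  exact (cyclotomic.irreducible_rat hs).not_isUnit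
    (isUnit_of_dvd_unit h (isUnit_C.2 hc.isUnit))

lemma cyc_not_dvd_rest {s : ℕ} (hs : 0 < s) {c : ℚ} (hc : c ≠ 0) (a : ℕ) (L' : Multiset ℕ)
    (hL' : ∀ r ∈ L', 0 < r) (hsL' : s ∉ L') :
    ¬ cyclotomic s ℚ ∣ Polynomial.C c * X ^ a * (L'.map fun r => cyclotomic r ℚ).prod := by
  intro h
  have hp := cyc_prime hs
  rcases (hp.2.2 _ _ h) with h1 | h1
  · rcases (hp.2.2 _ _ h1) with h2 | h2
    · exact cyc_not_dvd_C hs hc h2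
    · exact cyc_not_dvd_X hs (hp.dvd_of_dvd_pow h2)
  · obtain ⟨q, hq, hdvd⟩ := hp.exists_mem_multiset_dvd h1
    obtain ⟨r, hrL, rfl⟩ := Multiset.mem_map.1 hq
    exact cyc_not_dvd_cyc hs (hL' r hrL) (fun h => hsL' (h ▸ hrL)) hdvd

lemma multiplicity_X_eq {c : ℚ} (hc : c ≠ 0) (a : ℕ) (L : Multiset ℕ)
    (hL : ∀ r ∈ L, 0 < r) :
    multiplicity X (Polynomial.C c * X ^ a * (L.map fun r => cyclotomic r ℚ).prod) = a := by
  set P : ℚ[X] := (L.map fun r => cyclotomic r ℚ).prod with hP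
  have hw : Polynomial.C c * X ^ a * P = X ^ a * (Polynomial.C c * P) := by ring
  have hXw : ¬ X ∣ Polynomial.C c * P := by
    rw [Polynomial.X_dvd_iff]
    rw [Polynomial.coeff_zero_eq_eval_zero]
    simp only [Polynomial.eval_mul, Polynomial.eval_C]
    intro hev
    rcases mul_eq_zero.1 hev with h | h
    · exact hc h
    · have : Polynomial.eval 0 P = (L.map fun r => Polynomial.eval 0 (cyclotomic r ℚ)).prod := by
        rw [hP]
        rw [Polynomial.eval_multiset_prod, Multiset.map_map]
        rfl
      rw [this] at h
      have h0 : (0:ℚ) ∈ L.map fun r => Polynomial.eval 0 (cyclotomic r ℚ) :=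
        Multiset.prod_eq_zero_iff.1 h
      obtain ⟨r, hr, hre⟩ := Multiset.mem_map.1 h0
      exact cyc_eval_zero_ne (hL r hr) hre
  rw [hw]
  apply multiplicity_eq_of_dvd_of_not_dvd
  · exact Dvd.intro _ rfl
  · intro hdvd
    rw [pow_succ] at hdvd
    exact hXw ((mul_dvd_mul_iff_left (pow_ne_zero a (X_ne_zero (R := ℚ)))).1 hdvd)

lemma multiplicity_cyc_eq {c : ℚ} (hc : c ≠ 0) (a : ℕ) (L : Multiset ℕ)
    (hL : ∀ r ∈ L, 0 < r) {s : ℕ} (hs : 0 < s) :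
    multiplicity (cyclotomic s ℚ) (Polynomial.C c * X ^ a * (L.map fun r => cyclotomic r ℚ).prod)
      = L.count s := by
  classical
  set m := L.count s with hm
  have hsplit : L = Multiset.replicate m s + L.filter (· ≠ s) := by
    have h := (Multiset.filter_add_not (· = s) L).symm
    rw [Multiset.filter_eq'] at h
    simpa [← hm] using h
  have hprod : (L.map fun r => cyclotomic r ℚ).prod
      = cyclotomic s ℚ ^ m * ((L.filter (· ≠ s)).map fun r => cyclotomic r ℚ).prod := by
    conv_lhs => rw [hsplit]
    rw [Multiset.map_add, Multiset.prod_add, Multiset.map_replicate, Multiset.prod_replicate]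
  have hrest : ¬ cyclotomic s ℚ ∣
      Polynomial.C c * X ^ a * ((L.filter (· ≠ s)).map fun r => cyclotomic r ℚ).prod := by
    apply cyc_not_dvd_rest hs hc
    · intro r hr
      exact hL r (Multiset.mem_of_mem_filter hr)
    · intro hmem
      exact (Multiset.of_mem_filter hmem) rfl
  have hw : Polynomial.C c * X ^ a * (L.map fun r => cyclotomic r ℚ).prod
      = cyclotomic s ℚ ^ m *
        (Polynomial.C c * X ^ a * ((L.filter (· ≠ s)).map fun r => cyclotomic r ℚ).prod) := by
    rw [hprod]; ring
  rw [hw]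
  apply multiplicity_eq_of_dvd_of_not_dvd
  · exact Dvd.intro _ rfl
  · intro hdvd
    rw [pow_succ] at hdvd
    exact hrest ((mul_dvd_mul_iff_left (pow_ne_zero m (cyclotomic_ne_zero s ℚ))).1 hdvd)

lemma posCyc_ne_zero {c : ℚ} (hc : c ≠ 0) (a : ℕ) (L : Multiset ℕ) :
    Polynomial.C c * X ^ a * (L.map fun r => cyclotomic r ℚ).prod ≠ 0 := by
  apply mul_ne_zero (mul_ne_zero (by simpa using hc) (pow_ne_zero a (X_ne_zero (R := ℚ))))
  apply Multiset.prod_ne_zero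
  intro h0
  obtain ⟨r, _, hre⟩ := Multiset.mem_map.1 h0
  exact cyclotomic_ne_zero r ℚ hre

lemma Bd_eq {d : ℕ} {c : ℚ} (hc : 0 < c) (a : ℕ) (L : Multiset ℕ) (hL : ∀ r ∈ L, 0 < r) :
    Bd d (Polynomial.C c * X ^ a * (L.map fun r => cyclotomic r ℚ).prod)
      = 2 * a + (L.map fun r => ((r.totient : ℚ) + d * phiD d r)).sum := by
  classical
  set f : ℚ[X] := Polynomial.C c * X ^ a * (L.map fun r => cyclotomic r ℚ).prod with hf
  have hf0 : f ≠ 0 := posCyc_ne_zero hc.ne' a L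
  have hcover : ∀ s ∈ L, s ∈ Finset.Icc 1 (2 * f.natDegree ^ 2 + 1) := by
    intro s hsL
    have hs : 0 < s := hL s hsL
    have hdvd : cyclotomic s ℚ ∣ f := by
      refine Dvd.dvd.mul_left ?_ _
      exact Multiset.dvd_prod (Multiset.mem_map.2 ⟨s, hsL, rfl⟩)
    have hdeg : s.totient ≤ f.natDegree := by
      have := Polynomial.natDegree_le_of_dvd hdvd hf0
      rwa [Polynomial.natDegree_cyclotomic] at this
    have h1 : s ≤ 2 * s.totient ^ 2 := le_two_mul_totient_sq s hs.ne'
    have h2 : s.totient ^ 2 ≤ f.natDegree ^ 2 := Nat.pow_le_pow_left hdeg 2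
    rw [Finset.mem_Icc]
    omega
  rw [Bd, multiplicity_X_eq hc.ne' a L hL]
  congr 1
  have hcnt : ∀ s ∈ Finset.Icc 1 (2 * f.natDegree ^ 2 + 1),
      multiplicity (cyclotomic s ℚ) f = L.count s := by
    intro s hsIcc
    rw [Finset.mem_Icc] at hsIcc
    exact multiplicity_cyc_eq hc.ne' a L hL (by omega)
  rw [Finset.sum_congr rfl fun s hs => by rw [hcnt s hs]]
  rw [Finset.sum_multiset_map_count L fun r => ((r.totient : ℚ) + d * phiD d r)]
  rw [← Finset.sum_subset (fun s hs => hcover s (Multiset.mem_toFinset.1 hs))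
    (fun s _ hs => by rw [Multiset.count_eq_zero_of_notMem (fun h => hs (Multiset.mem_toFinset.2 h))]; simp)]
  refine Finset.sum_congr rfl fun s _ => ?_
  rw [nsmul_eq_mul]

lemma PF_multiset (L : Multiset ℕ) (z : ℕ → ℂ) (t : ℕ → ℚ) (h : ∀ r ∈ L, PF (z r) (t r)) :
    PF ((L.map z).prod) ((L.map t).sum) := by
  induction L using Multiset.induction with
  | empty => simpa using PF_one
  | cons a s ih =>
    rw [Multiset.map_cons, Multiset.map_cons, Multiset.prod_cons, Multiset.sum_cons]
    exact PF_mul (h _ (Multiset.mem_cons_self a s))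
      (ih fun r hr => h r (Multiset.mem_cons_of_mem hr))

lemma PF_div {z w : ℂ} {s t : ℚ} (hz : PF z s) (hw : PF w t) : PF (z / w) (s - t) := by
  obtain ⟨ρ, hρ, rfl⟩ := hz
  obtain ⟨σ, hσ, rfl⟩ := hw
  refine ⟨ρ / σ, div_pos hρ hσ, ?_⟩
  have hexp : Complex.exp ((Real.pi * ((s - t : ℚ) : ℝ) : ℝ) * Complex.I)
      = Complex.exp ((Real.pi * (s : ℝ) : ℝ) * Complex.I)
        / Complex.exp ((Real.pi * (t : ℝ) : ℝ) * Complex.I) := by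
    rw [← Complex.exp_sub]
    congr 1
    push_cast
    ring
  rw [hexp]
  have h1 : ((σ:ℂ)) ≠ 0 := by exact_mod_cast hσ.ne'
  have h2 := Complex.exp_ne_zero ((Real.pi * (t : ℝ) : ℝ) * Complex.I)
  push_cast
  field_simp

lemma PF_poly {d : ℕ} (hd : 2 ≤ d) {f : ℚ[X]} (hf : IsPosCycProduct f)
    (hfd : ¬ cyclotomic d ℚ ∣ f) :
    PF ((Polynomial.aeval (Complex.exp ((2 * Real.pi / d : ℝ) * Complex.I))) f) (Bd d f / d) := by
  obtain ⟨c, a, L, hc, hL, rfl⟩ := hf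
  set ζ : ℂ := Complex.exp ((2 * Real.pi / d : ℝ) * Complex.I) with hζ
  have hdL : d ∉ L := by
    intro h
    exact hfd (Dvd.dvd.mul_left (Multiset.dvd_prod (Multiset.mem_map.2 ⟨d, h, rfl⟩)) _)
  rw [Bd_eq hc a L hL]
  have haev : (Polynomial.aeval ζ) (Polynomial.C c * X ^ a * (L.map fun r => cyclotomic r ℚ).prod)
      = ((c:ℝ):ℂ) * ζ ^ a * (L.map fun r => (Polynomial.aeval ζ) (cyclotomic r ℚ)).prod := by
    rw [map_mul, map_mul, map_pow, Polynomial.aeval_X, Polynomial.aeval_C]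
    rw [map_multiset_prod, Multiset.map_map]
    push_cast
    rfl
  rw [haev]
  have hPFc : PF ((c:ℝ):ℂ) 0 := PF_real (by exact_mod_cast hc)
  have hPFζ : PF (ζ ^ a) (2 * a / d) := by
    rw [hζ, ← Complex.exp_nat_mul]
    have : ((a:ℂ)) * (((2 * Real.pi / d : ℝ) : ℂ) * Complex.I)
        = ((Real.pi * ((2 * a / d : ℚ) : ℝ) : ℝ) : ℂ) * Complex.I := by
      push_cast
      ring
    rw [this]
    exact PF_exp _
  have hPFprod : PF ((L.map fun r => (Polynomial.aeval ζ) (cyclotomic r ℚ)).prod)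
      ((L.map fun r => ((r.totient : ℚ) + d * phiD d r) / d).sum) := by
    apply PF_multiset
    intro r hr
    exact PF_cyclotomic hd (hL r hr) (fun h => hdL (h ▸ hr))
  have hfinal := PF_mul (PF_mul hPFc hPFζ) hPFprod
  refine PF_congr hfinal 0 ?_
  push_cast
  have hsum : (L.map fun r => ((r.totient : ℚ) + d * phiD d r) / d).sum
      = (L.map fun r => ((r.totient : ℚ) + d * phiD d r)).sum / d := by
    simp only [div_eq_mul_inv]
    rw [Multiset.sum_map_mul_right]
  rw [hsum]
  ring

/-- Let `d ≥ 2` and `ζ = exp(2πi/d)`. Let `f, g ∈ ℚ[q]` each be a product of a positive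
rational constant, a power of `q`, and cyclotomic polynomials, with `Φ_d` dividing neither
`f` nor `g`. If `f(ζ)/g(ζ)` is a real number, then `(B_d(f) − B_d(g))/d` is an integer;
moreover this integer is even if `f(ζ)/g(ζ) > 0` and odd if `f(ζ)/g(ζ) < 0`. -/
theorem Bd_sub_div_d_int_of_real (d : ℕ) (hd : 2 ≤ d) (f g : Polynomial ℚ)
    (hf : IsPosCycProduct f) (hg : IsPosCycProduct g)
    (hfd : ¬ cyclotomic d ℚ ∣ f) (hgd : ¬ cyclotomic d ℚ ∣ g)
    (hreal : (aeval (Complex.exp (2 * Real.pi * Complex.I / d)) f /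
        aeval (Complex.exp (2 * Real.pi * Complex.I / d)) g).im = 0) :
    ∃ n : ℤ, (Bd d f - Bd d g) / d = (n : ℚ) ∧
      (0 < (aeval (Complex.exp (2 * Real.pi * Complex.I / d)) f /
          aeval (Complex.exp (2 * Real.pi * Complex.I / d)) g).re → Even n) ∧
      ((aeval (Complex.exp (2 * Real.pi * Complex.I / d)) f /
          aeval (Complex.exp (2 * Real.pi * Complex.I / d)) g).re < 0 → Odd n) := by
  have hζeq : Complex.exp (2 * Real.pi * Complex.I / d)
      = Complex.exp ((2 * Real.pi / d : ℝ) * Complex.I) := by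
    congr 1
    push_cast
    ring
  rw [hζeq] at hreal ⊢
  have hq := PF_div (PF_poly hd hf hfd) (PF_poly hd hg hgd)
  set t : ℚ := Bd d f / d - Bd d g / d with ht
  obtain ⟨ρ, hρ, heq⟩ := hq
  rw [heq] at hreal ⊢
  rw [Complex.mul_im, Complex.ofReal_re, Complex.ofReal_im, Complex.exp_ofReal_mul_I_im,
    Complex.exp_ofReal_mul_I_re] at hreal
  have hsin : Real.sin (Real.pi * (t : ℝ)) = 0 := by
    rcases mul_eq_zero.1 (by linarith [hreal] : ρ * Real.sin (Real.pi * (t : ℝ)) = 0) with h | h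
    · exact absurd h hρ.ne'
    · exact h
  obtain ⟨n, hn⟩ := Real.sin_eq_zero_iff.1 hsin
  have htn : (t : ℝ) = (n : ℝ) := by
    have h' : (n:ℝ) * Real.pi = (t:ℝ) * Real.pi := by linarith [hn]
    exact (mul_right_cancel₀ Real.pi_ne_zero h').symm
  have htq : t = (n : ℚ) := by exact_mod_cast htn
  refine ⟨n, by rw [sub_div, ← ht, htq], ?_, ?_⟩
  all_goals
    simp only [Complex.mul_re, Complex.ofReal_re, Complex.ofReal_im,
      Complex.exp_ofReal_mul_I_re, Complex.exp_ofReal_mul_I_im, hsin, mul_zero, zero_mul,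
      sub_zero, htn]
  · -- positive: even
    intro hpos
    by_contra hev
    obtain ⟨m, hm⟩ := Int.not_even_iff_odd.1 hev
    have hcos : Real.cos (Real.pi * (n : ℝ)) = -1 := by
      rw [hm]
      push_cast
      rw [show Real.pi * (2 * (m:ℝ) + 1) = (m:ℝ) * (2 * Real.pi) + Real.pi by ring,
        Real.cos_add, Real.cos_int_mul_two_pi, Real.cos_pi,
        show ((m:ℝ)) * (2 * Real.pi) = (2*m : ℤ) * Real.pi by push_cast; ring,
        Real.sin_int_mul_pi]
      ring
    rw [hcos] at hpos
    nlinarith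
  · -- negative: odd
    intro hneg
    rw [← Int.not_even_iff_odd]
    intro hev
    obtain ⟨m, hm⟩ := hev
    have hcos : Real.cos (Real.pi * (n : ℝ)) = 1 := by
      rw [hm]
      push_cast
      rw [show Real.pi * ((m:ℝ) + (m:ℝ)) = (m:ℝ) * (2 * Real.pi) by ring,
        Real.cos_int_mul_two_pi]
    rw [hcos] at hneg
    nlinarith
end

section
/- Let i > j ≥ 0 be integers and d ≥ 2 an integer. Then B_d(q^i − q^j) = i + j + d·⌊(i−j)/d⌋ + d/2, and B_d(q^i + q^j) = i + j + d·(⌊2(i−j)/d⌋ − ⌊(i−j)/d⌋). -/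
open Polynomial

private lemma cyclo_eval_zero_ne {r : ℕ} (hr : 0 < r) : (cyclotomic r ℚ).eval 0 ≠ 0 := by
  obtain ⟨c, hc⟩ : cyclotomic r ℚ ∣ X ^ r - 1 := by
    rw [← prod_cyclotomic_eq_X_pow_sub_one hr ℚ]
    exact Finset.dvd_prod_of_mem _ (Nat.mem_divisors_self r hr.ne')
  have h := congrArg (eval 0) hc
  simp only [eval_sub, eval_pow, eval_X, eval_one, eval_mul, zero_pow hr.ne'] at h
  intro h0
  rw [h0, zero_mul] at h
  norm_num at h

private lemma cyclo_not_dvd_X {r : ℕ} (hr : 0 < r) : ¬ cyclotomic r ℚ ∣ X := by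
  rintro ⟨c, hc⟩
  have h0 : c.eval 0 = 0 := by
    have h := congrArg (eval 0) hc
    simp only [eval_X, eval_mul] at h
    rcases mul_eq_zero.1 h.symm with h' | h'
    · exact absurd h' (cyclo_eval_zero_ne hr)
    · exact h'
  obtain ⟨c', hc'⟩ : (X : ℚ[X]) ∣ c := by
    rw [X_dvd_iff, coeff_zero_eq_eval_zero]; exact h0
  have hone : (1 : ℚ[X]) = cyclotomic r ℚ * c' := by
    apply mul_left_cancel₀ (X_ne_zero (R := ℚ))
    rw [mul_one]
    calc (X : ℚ[X]) = cyclotomic r ℚ * c := hc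
      _ = X * (cyclotomic r ℚ * c') := by rw [hc']; ring
  exact (cyclotomic.irreducible_rat hr).not_isUnit (IsUnit.of_mul_eq_one _ hone.symm)

private lemma cyclo_coprime_aux {r₀ : ℕ} (hr : 0 < r₀) (s : Finset ℕ) (hs : r₀ ∉ s) (j : ℕ) :
    IsCoprime (cyclotomic r₀ ℚ) (X ^ j * ∏ r ∈ s, cyclotomic r ℚ) := by
  have hirr := cyclotomic.irreducible_rat hr
  refine IsCoprime.mul_right ?_ ?_
  · exact (hirr.coprime_iff_not_dvd.2 (cyclo_not_dvd_X hr)).pow_right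
  · exact IsCoprime.prod_right fun i hi => cyclotomic.isCoprime_rat (fun h => hs (h ▸ hi))

private lemma mult_cyclo (s : Finset ℕ) (j r₀ : ℕ) (hr : 0 < r₀) :
    multiplicity (cyclotomic r₀ ℚ) (X ^ j * ∏ r ∈ s, cyclotomic r ℚ)
      = if r₀ ∈ s then 1 else 0 := by
  split_ifs with h
  · apply multiplicity_eq_of_dvd_of_not_dvd
    · rw [pow_one]
      exact Dvd.dvd.mul_left (Finset.dvd_prod_of_mem _ h) _
    · intro hdvd
      rw [← Finset.mul_prod_erase s _ h, ← mul_assoc, mul_comm (X ^ j), mul_assoc] at hdvd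
      have h2 : cyclotomic r₀ ℚ ∣ X ^ j * ∏ r ∈ s.erase r₀, cyclotomic r ℚ := by
        rw [pow_succ, pow_one] at hdvd
        exact (mul_dvd_mul_iff_left (cyclotomic_ne_zero r₀ ℚ)).1 hdvd
      exact (cyclotomic.irreducible_rat hr).not_isUnit
        ((cyclo_coprime_aux hr _ (Finset.notMem_erase r₀ s) j).isUnit_of_dvd' dvd_rfl h2)
  · rw [multiplicity_eq_zero]
    intro hdvd
    exact (cyclotomic.irreducible_rat hr).not_isUnit
      ((cyclo_coprime_aux hr s h j).isUnit_of_dvd' dvd_rfl hdvd)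

private lemma mult_X (s : Finset ℕ) (hs : ∀ r ∈ s, 0 < r) (j : ℕ) :
    multiplicity (X : ℚ[X]) (X ^ j * ∏ r ∈ s, cyclotomic r ℚ) = j := by
  apply multiplicity_eq_of_dvd_of_not_dvd (dvd_mul_right _ _)
  intro hdvd
  have hX : (X : ℚ[X]) ∣ ∏ r ∈ s, cyclotomic r ℚ := by
    rw [pow_succ] at hdvd
    exact (mul_dvd_mul_iff_left (pow_ne_zero j (X_ne_zero (R := ℚ)))).1 hdvd
  rw [X_dvd_iff, coeff_zero_eq_eval_zero, eval_prod] at hX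
  obtain ⟨r, hrs, hr0⟩ := Finset.prod_eq_zero_iff.1 hX
  exact cyclo_eval_zero_ne (hs r hrs) hr0

private lemma fiber_card (d n r : ℕ) (hd : 2 ≤ d) (hn : 0 < n) (hrd : r ∣ n) (hr1 : r ≠ 1) :
    ((Finset.Icc 1 (n / d)).filter (fun m => n / Nat.gcd m n = r)).card
      = ((Finset.Icc 1 (r / d)).filter fun j => Nat.gcd j r = 1).card := by
  have hd0 : 0 < d := by omega
  have hr0 : 0 < r := Nat.pos_of_dvd_of_pos hrd hn
  set g := n / r with hg_def
  have hrg : r * g = n := Nat.mul_div_cancel' hrd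
  have hg : 0 < g := by
    rcases Nat.eq_zero_or_pos g with h | h
    · rw [h, mul_zero] at hrg; omega
    · exact h
  apply Finset.card_bij' (fun m _ => m / g) (fun j _ => j * g)
  · -- hi : forward membership
    intro m hm
    simp only [Finset.mem_filter, Finset.mem_Icc] at hm ⊢
    obtain ⟨⟨hm1, hm2⟩, hmr⟩ := hm
    have hgcd : Nat.gcd m n = g := by
      have hdvd : Nat.gcd m n ∣ n := Nat.gcd_dvd_right m n
      have h2 : n = r * Nat.gcd m n := (Nat.div_eq_iff_eq_mul_left (Nat.pos_of_dvd_of_pos hdvd hn) hdvd).1 hmr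
      rw [hg_def]
      exact (Nat.div_eq_of_eq_mul_right hr0 h2).symm
    have hgm : g ∣ m := hgcd ▸ Nat.gcd_dvd_left m n
    refine ⟨⟨Nat.div_pos (Nat.le_of_dvd hm1 hgm) hg, ?_⟩, ?_⟩
    · -- m / g ≤ r / d
      rw [Nat.le_div_iff_mul_le hd0]
      have hmd : m * d ≤ n := (Nat.le_div_iff_mul_le hd0).1 hm2
      have : m / g * d * g ≤ r * g := by
        calc m / g * d * g = m / g * g * d := by ring
          _ = m * d := by rw [Nat.div_mul_cancel hgm]
          _ ≤ n := hmd
          _ = r * g := hrg.symm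
      exact Nat.le_of_mul_le_mul_right this hg
    · -- coprimality
      have := Nat.coprime_div_gcd_div_gcd (m := m) (n := n) (hgcd ▸ hg)
      rw [hgcd] at this
      have hnr : n / g = r := by rw [← hrg, Nat.mul_div_cancel _ hg]
      rwa [hnr] at this
  · -- hj : backward membership
    intro j hj
    simp only [Finset.mem_filter, Finset.mem_Icc] at hj ⊢
    obtain ⟨⟨hj1, hj2⟩, hjr⟩ := hj
    have hjd : j * d ≤ r := (Nat.le_div_iff_mul_le hd0).1 hj2
    refine ⟨⟨Nat.one_le_iff_ne_zero.2 (by positivity), ?_⟩, ?_⟩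
    · rw [Nat.le_div_iff_mul_le hd0]
      calc j * g * d = j * d * g := by ring
        _ ≤ r * g := Nat.mul_le_mul_right g hjd
        _ = n := hrg
    · rw [← hrg, Nat.gcd_mul_right, hjr, one_mul, Nat.mul_div_cancel _ hg]
  · intro m hm
    simp only [Finset.mem_filter, Finset.mem_Icc] at hm
    obtain ⟨⟨hm1, hm2⟩, hmr⟩ := hm
    have hgcd : Nat.gcd m n = g := by
      have hdvd : Nat.gcd m n ∣ n := Nat.gcd_dvd_right m n
      have h2 : n = r * Nat.gcd m n := (Nat.div_eq_iff_eq_mul_left (Nat.pos_of_dvd_of_pos hdvd hn) hdvd).1 hmr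
      rw [hg_def]
      exact (Nat.div_eq_of_eq_mul_right hr0 h2).symm
    exact Nat.div_mul_cancel (hgcd ▸ Nat.gcd_dvd_left m n)
  · intro j _
    exact Nat.mul_div_cancel j hg

private lemma sum_phiD (d n : ℕ) (hd : 2 ≤ d) (hn : 0 < n) :
    ∑ r ∈ n.divisors, phiD d r = ((n / d : ℕ) : ℚ) + 1 / 2 := by
  have h1 : (1 : ℕ) ∈ n.divisors := Nat.one_mem_divisors.2 hn.ne'
  rw [← Finset.add_sum_erase _ _ h1]
  have hphi1 : phiD d 1 = 1 / 2 := by simp [phiD]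
  rw [hphi1, add_comm]
  congr 1
  have hkey : (Finset.Icc 1 (n / d)).card
      = ∑ r ∈ n.divisors.erase 1,
          ((Finset.Icc 1 (n / d)).filter (fun m => n / Nat.gcd m n = r)).card := by
    apply Finset.card_eq_sum_card_fiberwise
    intro m hm
    simp only [Finset.mem_coe, Finset.mem_Icc] at hm
    obtain ⟨hm1, hm2⟩ := hm
    have hmn : m < n := lt_of_le_of_lt hm2 (Nat.div_lt_self hn (by omega))
    have hgdvd : Nat.gcd m n ∣ n := Nat.gcd_dvd_right m n
    have hgpos : 0 < Nat.gcd m n := Nat.gcd_pos_of_pos_right m hn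
    refine Finset.mem_erase.2 ⟨?_, Nat.mem_divisors.2 ⟨Nat.div_dvd_of_dvd hgdvd, hn.ne'⟩⟩
    intro hcontra
    have : Nat.gcd m n = n := by
      have := Nat.eq_mul_of_div_eq_right hgdvd hcontra
      omega
    have : n ∣ m := this ▸ Nat.gcd_dvd_left m n
    exact absurd (Nat.le_of_dvd hm1 this) (by omega)
  have : ∑ r ∈ n.divisors.erase 1, phiD d r
      = ((∑ r ∈ n.divisors.erase 1,
          ((Finset.Icc 1 (n / d)).filter (fun m => n / Nat.gcd m n = r)).card : ℕ) : ℚ) := by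
    rw [Nat.cast_sum]
    apply Finset.sum_congr rfl
    intro r hr
    have hr1 : r ≠ 1 := (Finset.mem_erase.1 hr).1
    have hrd : r ∣ n := (Nat.mem_divisors.1 (Finset.mem_erase.1 hr).2).1
    rw [phiD, if_neg hr1, fiber_card d n r hd hn hrd hr1]
  rw [this, ← hkey, Nat.card_Icc]
  simp

private lemma Bd_formula (d j : ℕ) (s : Finset ℕ) (hs : ∀ r ∈ s, 0 < r)
    (f : ℚ[X]) (hf : f = X ^ j * ∏ r ∈ s, cyclotomic r ℚ)
    (hsub : s ⊆ Finset.Icc 1 (2 * f.natDegree ^ 2 + 1)) :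
    Bd d f = 2 * j + ∑ r ∈ s, ((Nat.totient r : ℚ) + d * phiD d r) := by
  unfold Bd
  rw [show multiplicity X f = j by rw [hf]; exact mult_X s hs j]
  congr 1
  calc ∑ r ∈ Finset.Icc 1 (2 * f.natDegree ^ 2 + 1),
        (multiplicity (cyclotomic r ℚ) f : ℚ) * ((Nat.totient r : ℚ) + d * phiD d r)
      = ∑ r ∈ Finset.Icc 1 (2 * f.natDegree ^ 2 + 1),
          (if r ∈ s then ((Nat.totient r : ℚ) + d * phiD d r) else 0) := by
        apply Finset.sum_congr rfl
        intro r hr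
        rw [hf, mult_cyclo s j r (Finset.mem_Icc.1 hr).1]
        split_ifs <;> simp
    _ = ∑ r ∈ s, ((Nat.totient r : ℚ) + d * phiD d r) := by
        rw [Finset.sum_ite_mem, Finset.inter_eq_right.2 hsub]

/-- Let `i > j ≥ 0` and `d ≥ 2` be integers. Then
`B_d(q^i − q^j) = i + j + d·⌊(i−j)/d⌋ + d/2`, and
`B_d(q^i + q^j) = i + j + d·(⌊2(i−j)/d⌋ − ⌊(i−j)/d⌋)`. -/
theorem Bd_X_pow_sub_and_add (d i j : ℕ) (hd : 2 ≤ d) (hij : j < i) :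
    Bd d (X ^ i - X ^ j)
      = (i : ℚ) + j + d * (((i - j) / d : ℕ) : ℚ) + (d : ℚ) / 2 ∧
    Bd d (X ^ i + X ^ j)
      = (i : ℚ) + j + d * ((((2 * (i - j)) / d : ℕ) : ℚ) - (((i - j) / d : ℕ) : ℚ)) := by
  set n := i - j with hn_def
  have hn : 0 < n := by omega
  have hin : j + n = i := by omega
  have hi1 : 1 ≤ i := by omega
  have hii : i ≤ 2 * i ^ 2 + 1 := by nlinarith
  have hinQ : (j : ℚ) + n = i := by exact_mod_cast hin
  -- weights sums
  have wsum : ∀ m : ℕ, 0 < m →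
      ∑ r ∈ m.divisors, ((Nat.totient r : ℚ) + d * phiD d r)
        = (m : ℚ) + d * (((m / d : ℕ) : ℚ) + 1 / 2) := by
    intro m hm
    rw [Finset.sum_add_distrib, ← Finset.mul_sum, sum_phiD d m hd hm]
    congr 1
    rw [← Nat.cast_sum]
    exact_mod_cast congrArg (Nat.cast (R := ℚ)) (Nat.sum_totient m)
  constructor
  · -- subtraction case
    have hf : (X : ℚ[X]) ^ i - X ^ j = X ^ j * ∏ r ∈ n.divisors, cyclotomic r ℚ := by
      rw [prod_cyclotomic_eq_X_pow_sub_one hn ℚ, mul_sub, mul_one, ← pow_add, hin]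
    have hdeg : ((X : ℚ[X]) ^ i - X ^ j).natDegree = i := by
      rw [natDegree_sub_eq_left_of_natDegree_lt (by simpa using hij), natDegree_X_pow]
    have hsub : n.divisors ⊆ Finset.Icc 1 (2 * ((X : ℚ[X]) ^ i - X ^ j).natDegree ^ 2 + 1) := by
      intro r hr
      rw [hdeg]
      obtain ⟨hrd, -⟩ := Nat.mem_divisors.1 hr
      have h1 : 0 < r := Nat.pos_of_dvd_of_pos hrd hn
      have h2 : r ≤ n := Nat.le_of_dvd hn hrd
      have h3 : n ≤ i := by omega
      exact Finset.mem_Icc.2 ⟨h1, by omega⟩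
    rw [Bd_formula d j n.divisors (fun r hr => Nat.pos_of_mem_divisors hr) _ hf hsub,
      wsum n hn]
    push_cast
    linarith
  · -- addition case
    have h2n : 0 < 2 * n := by omega
    have hsubdiv : n.divisors ⊆ (2 * n).divisors :=
      Nat.divisors_subset_of_dvd (by omega) (dvd_mul_left n 2)
    have hprod : (X : ℚ[X]) ^ n + 1 = ∏ r ∈ (2 * n).divisors \ n.divisors, cyclotomic r ℚ := by
      have hsd := Finset.prod_sdiff (f := fun r => cyclotomic r ℚ) hsubdiv
      rw [prod_cyclotomic_eq_X_pow_sub_one hn ℚ, prod_cyclotomic_eq_X_pow_sub_one h2n ℚ] at hsd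
      apply mul_right_cancel₀ (b := (X : ℚ[X]) ^ n - 1)
      · have := X_pow_sub_C_ne_zero (R := ℚ) hn 1
        rwa [map_one] at this
      · rw [hsd, two_mul, pow_add]; ring
    have hf : (X : ℚ[X]) ^ i + X ^ j
        = X ^ j * ∏ r ∈ (2 * n).divisors \ n.divisors, cyclotomic r ℚ := by
      rw [← hprod, mul_add, mul_one, ← pow_add, hin]
    have hdeg : ((X : ℚ[X]) ^ i + X ^ j).natDegree = i := by
      rw [natDegree_add_eq_left_of_natDegree_lt (by simpa using hij), natDegree_X_pow]
    have hsub : (2 * n).divisors \ n.divisors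
        ⊆ Finset.Icc 1 (2 * ((X : ℚ[X]) ^ i + X ^ j).natDegree ^ 2 + 1) := by
      intro r hr
      rw [hdeg]
      obtain ⟨hrd, -⟩ := Nat.mem_divisors.1 (Finset.mem_sdiff.1 hr).1
      have h1 : 0 < r := Nat.pos_of_dvd_of_pos hrd h2n
      have h2 : r ≤ 2 * n := Nat.le_of_dvd h2n hrd
      have h3 : n ≤ i := by omega
      exact Finset.mem_Icc.2 ⟨h1, by nlinarith⟩
    rw [Bd_formula d j _ (fun r hr => Nat.pos_of_mem_divisors (Finset.mem_sdiff.1 hr).1) _ hf hsub,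
      Finset.sum_sdiff_eq_sub hsubdiv, wsum n hn, wsum (2 * n) h2n]
    push_cast
    linarith
end

section
/- Let i, j ≥ 0 be integers and d ≥ 2 an integer. Then: B_d(q^{i+d} − q^j) − B_d(q^i − q^j) equals 2d if i − j > 0, equals d if −d < i − j < 0, and equals 0 if i − j < −d. Also B_d(q^{i+d} + q^j) − B_d(q^i + q^j) equals 2d if i − j > −d/2, equals d if i − j = −d/2, and equals 0 if i − j < −d/2. -/
open Polynomial

open Finset

lemma sqfXn (n : ℕ) (hn : 0 < n) : Squarefree ((X : ℚ[X]) ^ n - 1) :=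
  (Polynomial.X_pow_sub_one_separable_iff.mpr (by exact_mod_cast hn.ne')).squarefree

lemma cyclo_prime (r : ℕ) (hr : 0 < r) : Prime (cyclotomic r ℚ) :=
  (cyclotomic.irreducible_rat hr).prime

lemma cyclo_not_dvd_X_pow (r b : ℕ) (hr : 0 < r) : ¬ (cyclotomic r ℚ ∣ X ^ b) := by
  intro h
  have h1 : cyclotomic r ℚ ∣ X := (cyclo_prime r hr).dvd_of_dvd_pow h
  have h2 : Associated (cyclotomic r ℚ) (X : ℚ[X]) :=
    (cyclotomic.irreducible_rat hr).associated_of_dvd Polynomial.irreducible_X h1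
  have h3 : (cyclotomic r ℚ).eval 0 = 0 := by
    obtain ⟨u, hu⟩ := h2.symm
    have h4 := congrArg (Polynomial.eval (0:ℚ)) hu
    simp only [eval_mul, eval_X, zero_mul] at h4
    simpa using h4.symm
  rcases eq_or_lt_of_le (show 1 ≤ r from hr) with h | h
  · rw [← h] at h3; simp [cyclotomic_one] at h3
  · rw [← coeff_zero_eq_eval_zero, cyclotomic_coeff_zero ℚ h] at h3
    norm_num at h3

lemma cyclo_dvd_X_pow_sub_one_iff (r n : ℕ) (hr : 0 < r) (hn : 0 < n) :
    cyclotomic r ℚ ∣ (X : ℚ[X]) ^ n - 1 ↔ r ∣ n := by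
  constructor
  · intro h
    have hmap : cyclotomic r ℂ ∣ (X : ℂ[X]) ^ n - 1 := by
      have := Polynomial.map_dvd (algebraMap ℚ ℂ) h
      simpa [Polynomial.map_cyclotomic] using this
    have hζ := Complex.isPrimitiveRoot_exp r hr.ne'
    set ζ := Complex.exp (2 * Real.pi * Complex.I / r)
    have hroot : IsRoot (cyclotomic r ℂ) ζ := hζ.isRoot_cyclotomic hr
    obtain ⟨c, hc⟩ := hmap
    have : ((X : ℂ[X]) ^ n - 1).eval ζ = 0 := by
      rw [hc]; simp [hroot.eq_zero]
    have hζn : ζ ^ n = 1 := by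
      have := this; simp at this; linear_combination this
    exact hζ.dvd_of_pow_eq_one n hζn
  · intro h
    rw [← prod_cyclotomic_eq_X_pow_sub_one hn]
    exact Finset.dvd_prod_of_mem _ (Nat.mem_divisors.mpr ⟨h, hn.ne'⟩)

lemma multX (b : ℕ) (u : ℚ[X]) (hu : ¬ ((X : ℚ[X]) ∣ u)) :
    multiplicity (X : ℚ[X]) (X ^ b * u) = b := by
  apply multiplicity_eq_of_dvd_of_not_dvd (dvd_mul_right _ _)
  rw [pow_succ]
  intro h
  exact hu ((mul_dvd_mul_iff_left (pow_ne_zero b X_ne_zero)).mp h)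

lemma multC1 (r b : ℕ) (hr : 0 < r) (F : ℚ[X]) (hsq : Squarefree F)
    (hdvd : cyclotomic r ℚ ∣ F) :
    multiplicity (cyclotomic r ℚ) ((X : ℚ[X]) ^ b * F) = 1 := by
  apply multiplicity_eq_of_dvd_of_not_dvd
  · simpa using hdvd.mul_left _
  · intro h
    have hcop : IsCoprime (cyclotomic r ℚ ^ 2) ((X : ℚ[X]) ^ b) :=
      (((cyclotomic.irreducible_rat hr).coprime_iff_not_dvd).mpr
        (cyclo_not_dvd_X_pow r b hr)).pow_left
    have h2 : cyclotomic r ℚ ^ 2 ∣ F := hcop.dvd_of_dvd_mul_left (by simpa using h)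
    rw [sq] at h2
    exact (cyclotomic.irreducible_rat hr).not_isUnit (hsq _ h2)

lemma multC0 (r b : ℕ) (hr : 0 < r) (F : ℚ[X]) (hnd : ¬ (cyclotomic r ℚ ∣ F)) :
    multiplicity (cyclotomic r ℚ) ((X : ℚ[X]) ^ b * F) = 0 := by
  apply multiplicity_eq_of_dvd_of_not_dvd (by simp)
  rw [pow_one]
  intro h
  rcases (cyclo_prime r hr).dvd_mul.mp h with h | h
  · exact cyclo_not_dvd_X_pow r b hr h
  · exact hnd h

lemma key_sum (d n : ℕ) (hd : 2 ≤ d) (hn : 0 < n) :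
    ∑ r ∈ n.divisors.erase 1, phiD d r = ((n / d : ℕ) : ℚ) := by
  have hd0 : 0 < d := by omega
  have hstep : ∀ r ∈ n.divisors.erase 1,
      phiD d r = (((Finset.Icc 1 (r / d)).filter fun j => Nat.gcd j r = 1).card : ℚ) := by
    intro r hr
    rw [phiD, if_neg (Finset.mem_erase.mp hr).1]
  rw [Finset.sum_congr rfl hstep]
  rw [← Nat.cast_sum]
  congr 1
  rw [← Finset.card_sigma]
  have hcard : (Finset.Icc 1 (n / d)).card = n / d := by simp
  rw [← hcard]
  refine Finset.card_bij' (fun p _ => p.2 * (n / p.1))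
    (fun m _ => ⟨n / Nat.gcd m n, m / Nat.gcd m n⟩) ?_ ?_ ?_ ?_
  case _ =>
    rintro ⟨r, j⟩ hp
    simp only [Finset.mem_sigma, Finset.mem_erase, Nat.mem_divisors, Finset.mem_filter,
      Finset.mem_Icc] at hp
    obtain ⟨⟨hr1, hrn, -⟩, ⟨hj1, hjd⟩, hgcd⟩ := hp
    have hq : 0 < n / r := Nat.div_pos (Nat.le_of_dvd hn hrn) (Nat.pos_of_dvd_of_pos hrn hn)
    simp only [Finset.mem_Icc]
    constructor
    · exact Nat.one_le_iff_ne_zero.mpr (by positivity)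
    · rw [Nat.le_div_iff_mul_le hd0]
      have hjd' : j * d ≤ r := (Nat.le_div_iff_mul_le hd0).mp hjd
      calc j * (n / r) * d = (j * d) * (n / r) := by ring
        _ ≤ r * (n / r) := Nat.mul_le_mul_right _ hjd'
        _ = n := Nat.mul_div_cancel' hrn
  case _ =>
    intro m hm
    simp only [Finset.mem_Icc] at hm
    obtain ⟨hm1, hmd⟩ := hm
    have hm0 : 0 < m := hm1
    have hg : 0 < Nat.gcd m n := Nat.gcd_pos_of_pos_left n hm0
    have hgm : Nat.gcd m n ∣ m := Nat.gcd_dvd_left m n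
    have hgn : Nat.gcd m n ∣ n := Nat.gcd_dvd_right m n
    have hgltn : Nat.gcd m n < n := by
      have h1 : Nat.gcd m n ≤ m := Nat.le_of_dvd hm0 hgm
      have h2 : n / d < n := Nat.div_lt_self hn (by omega)
      omega
    simp only [Finset.mem_sigma, Finset.mem_erase, Nat.mem_divisors, Finset.mem_filter,
      Finset.mem_Icc]
    refine ⟨⟨?_, Nat.div_dvd_of_dvd hgn, hn.ne'⟩, ⟨?_, ?_⟩, ?_⟩
    · intro h1
      have := Nat.eq_mul_of_div_eq_right hgn h1
      omega
    · exact (Nat.one_le_div_iff hg).mpr (Nat.le_of_dvd hm0 hgm)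
    · rw [Nat.le_div_iff_mul_le hd0, Nat.le_div_iff_mul_le hg]
      have : m * d ≤ n := (Nat.le_div_iff_mul_le hd0).mp hmd
      calc m / Nat.gcd m n * d * Nat.gcd m n = (m / Nat.gcd m n * Nat.gcd m n) * d := by ring
        _ = m * d := by rw [Nat.div_mul_cancel hgm]
        _ ≤ n := this
    · exact Nat.coprime_div_gcd_div_gcd hg
  case _ =>
    rintro ⟨r, j⟩ hp
    simp only [Finset.mem_sigma, Finset.mem_erase, Nat.mem_divisors, Finset.mem_filter,
      Finset.mem_Icc] at hp
    obtain ⟨⟨hr1, hrn, -⟩, ⟨hj1, hjd⟩, hgcd⟩ := hp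
    have hq : 0 < n / r := Nat.div_pos (Nat.le_of_dvd hn hrn) (Nat.pos_of_dvd_of_pos hrn hn)
    have hgeq : Nat.gcd (j * (n / r)) n = n / r := by
      have hrn' : r * (n / r) = n := Nat.mul_div_cancel' hrn
      calc Nat.gcd (j * (n / r)) n = Nat.gcd (j * (n / r)) (r * (n / r)) := by rw [hrn']
        _ = Nat.gcd j r * (n / r) := Nat.gcd_mul_right _ _ _
        _ = n / r := by rw [hgcd, one_mul]
    have hr' : n / (n / r) = r := Nat.div_div_self hrn hn.ne'
    have hj' : j * (n / r) / (n / r) = j := Nat.mul_div_cancel j hq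
    simp only [hgeq, hr', hj']
  case _ =>
    intro m hm
    simp only [Finset.mem_Icc] at hm
    have hg : 0 < Nat.gcd m n := Nat.gcd_pos_of_pos_left n hm.1
    have hgm : Nat.gcd m n ∣ m := Nat.gcd_dvd_left m n
    have hgn : Nat.gcd m n ∣ n := Nat.gcd_dvd_right m n
    simp only
    rw [Nat.div_div_self hgn hn.ne', Nat.div_mul_cancel hgm]

lemma sum_divisors_w (d n : ℕ) (hd : 2 ≤ d) (hn : 0 < n) :
    ∑ r ∈ n.divisors, ((Nat.totient r : ℚ) + d * phiD d r)
      = (n : ℚ) + d * (1 / 2 + ((n / d : ℕ) : ℚ)) := by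
  rw [Finset.sum_add_distrib, ← Finset.mul_sum]
  have h1 : ∑ r ∈ n.divisors, (Nat.totient r : ℚ) = n := by
    rw [← Nat.cast_sum]
    exact_mod_cast congrArg (Nat.cast : ℕ → ℚ) (Nat.sum_totient n)
  have h2 : ∑ r ∈ n.divisors, phiD d r = 1 / 2 + ((n / d : ℕ) : ℚ) := by
    rw [← Finset.add_sum_erase _ _ (Nat.one_mem_divisors.mpr hn.ne')]
    rw [key_sum d n hd hn]
    simp [phiD]
  rw [h1, h2]

lemma Bd_neg (d : ℕ) (f : ℚ[X]) : Bd d (-f) = Bd d f := by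
  simp [Bd, multiplicity_neg, natDegree_neg]

lemma mult_filter_sum (d : ℕ) (f : ℚ[X]) (p : ℕ → Prop) [DecidablePred p]
    (hm : ∀ r, 1 ≤ r → r ≤ 2 * f.natDegree ^ 2 + 1 →
      (multiplicity (cyclotomic r ℚ) f : ℚ) = if p r then 1 else 0) :
    ∑ r ∈ Finset.Icc 1 (2 * f.natDegree ^ 2 + 1),
      (multiplicity (cyclotomic r ℚ) f : ℚ) * ((Nat.totient r : ℚ) + d * phiD d r)
    = ∑ r ∈ (Finset.Icc 1 (2 * f.natDegree ^ 2 + 1)).filter p,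
        ((Nat.totient r : ℚ) + d * phiD d r) := by
  rw [Finset.sum_filter]
  apply Finset.sum_congr rfl
  intro r hr
  rw [Finset.mem_Icc] at hr
  rw [hm r hr.1 hr.2]
  split <;> simp

lemma Bd_sub (d a b : ℕ) (hd : 2 ≤ d) (hab : b < a) :
    Bd d (X ^ a - X ^ b) = 2 * b + ((a - b : ℕ) : ℚ)
      + d * (1 / 2 + (((a - b) / d : ℕ) : ℚ)) := by
  set n := a - b with hn
  have hn0 : 0 < n := by omega
  have hf : (X : ℚ[X]) ^ a - X ^ b = X ^ b * (X ^ n - 1) := by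
    rw [mul_sub, ← pow_add, mul_one]
    congr 2
    omega
  have hXnd : ¬ ((X : ℚ[X]) ∣ X ^ n - 1) := by
    have hc : ((X : ℚ[X]) ^ n - 1).coeff 0 = -1 := by
      simp [coeff_X_pow, hn0.ne]
    rw [X_dvd_iff, hc]
    norm_num
  have hdeg : (X ^ a - X ^ b : ℚ[X]).natDegree = a := by
    rw [hf, natDegree_mul (pow_ne_zero _ X_ne_zero)]
    · rw [natDegree_X_pow]
      have : ((X : ℚ[X]) ^ n - 1).natDegree = n := by
        simpa using natDegree_X_pow_sub_C (n := n) (r := (1 : ℚ))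
      omega
    · have : ((X : ℚ[X]) ^ n - 1).Monic := by
        simpa using monic_X_pow_sub_C (1 : ℚ) hn0.ne'
      exact this.ne_zero
  have hmX : multiplicity (X : ℚ[X]) (X ^ a - X ^ b) = b := by
    rw [hf]; exact multX b _ hXnd
  rw [Bd, hmX]
  rw [mult_filter_sum d _ (fun r => r ∣ n) (fun r hr1 hr2 => by
    rw [hf]
    by_cases h : r ∣ n
    · rw [multC1 r b hr1 _ (sqfXn n hn0) ((cyclo_dvd_X_pow_sub_one_iff r n hr1 hn0).mpr h)]
      simp [h]
    · rw [multC0 r b hr1 _ (fun hc => h ((cyclo_dvd_X_pow_sub_one_iff r n hr1 hn0).mp hc))]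
      simp [h])]
  have hset : (Finset.Icc 1 (2 * (X ^ a - X ^ b : ℚ[X]).natDegree ^ 2 + 1)).filter
      (fun r => r ∣ n) = n.divisors := by
    rw [hdeg]
    ext r
    simp only [Finset.mem_filter, Finset.mem_Icc, Nat.mem_divisors]
    constructor
    · rintro ⟨⟨h1, h2⟩, h3⟩; exact ⟨h3, hn0.ne'⟩
    · rintro ⟨h1, -⟩
      have hr0 : 0 < r := Nat.pos_of_dvd_of_pos h1 hn0
      have hrn : r ≤ n := Nat.le_of_dvd hn0 h1
      refine ⟨⟨hr0, ?_⟩, h1⟩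
      have hna : n ≤ a := by omega
      nlinarith
  rw [hset, sum_divisors_w d n hd hn0]
  push_cast
  ring

lemma Bd_two (d a : ℕ) (hd : 2 ≤ d) : Bd d (X ^ a + X ^ a) = 2 * a := by
  have hf : (X : ℚ[X]) ^ a + X ^ a = X ^ a * C 2 := by
    have h2 : (C (2:ℚ)) = (2 : ℚ[X]) := by
      rw [show (2:ℚ) = ((2:ℕ):ℚ) by norm_num, C_eq_natCast]; norm_num
    rw [h2]; ring
  have hC2 : IsUnit (C (2:ℚ)) := isUnit_C.mpr (by norm_num)
  have hmX : multiplicity (X : ℚ[X]) (X ^ a + X ^ a) = a := by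
    rw [hf]
    exact multX a _ (fun h => by
      have := X_dvd_iff.mp h
      simp at this)
  rw [Bd, hmX]
  have hz : ∀ r ∈ Finset.Icc 1 (2 * (X ^ a + X ^ a : ℚ[X]).natDegree ^ 2 + 1),
      (multiplicity (cyclotomic r ℚ) (X ^ a + X ^ a : ℚ[X]) : ℚ)
        * ((Nat.totient r : ℚ) + d * phiD d r) = 0 := by
    intro r hr
    rw [Finset.mem_Icc] at hr
    rw [hf, multC0 r a hr.1 _ (fun h => (cyclo_prime r hr.1).not_unit
      (isUnit_of_dvd_unit h hC2))]
    simp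
  rw [Finset.sum_congr rfl hz]
  simp

lemma Bd_add (d a b : ℕ) (hd : 2 ≤ d) (hab : b < a) :
    Bd d (X ^ a + X ^ b) = 2 * b
      + (((2 * (a - b)) : ℕ) : ℚ) + d * (1 / 2 + (((2 * (a - b)) / d : ℕ) : ℚ))
      - (((a - b : ℕ) : ℚ) + d * (1 / 2 + (((a - b) / d : ℕ) : ℚ))) := by
  set n := a - b with hn
  have hn0 : 0 < n := by omega
  have hf : (X : ℚ[X]) ^ a + X ^ b = X ^ b * (X ^ n + 1) := by
    rw [mul_add, ← pow_add, mul_one]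
    congr 2
    omega
  have hfac : ((X : ℚ[X]) ^ n - 1) * (X ^ n + 1) = X ^ (2 * n) - 1 := by
    rw [two_mul, pow_add]; ring
  have hsq2 : Squarefree ((X : ℚ[X]) ^ (2 * n) - 1) := sqfXn _ (by omega)
  have hsq : Squarefree ((X : ℚ[X]) ^ n + 1) :=
    hsq2.squarefree_of_dvd ⟨X ^ n - 1, by rw [← hfac]; ring⟩
  have hdvd_iff : ∀ r, 0 < r →
      (cyclotomic r ℚ ∣ (X : ℚ[X]) ^ n + 1 ↔ (r ∣ 2 * n ∧ ¬ r ∣ n)) := by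
    intro r hr
    constructor
    · intro h
      have h2 : cyclotomic r ℚ ∣ (X : ℚ[X]) ^ (2 * n) - 1 := by
        rw [← hfac]; exact h.mul_left _
      refine ⟨(cyclo_dvd_X_pow_sub_one_iff r _ hr (by omega)).mp h2, fun hrn => ?_⟩
      have h1 : cyclotomic r ℚ ∣ (X : ℚ[X]) ^ n - 1 :=
        (cyclo_dvd_X_pow_sub_one_iff r n hr hn0).mpr hrn
      have : cyclotomic r ℚ * cyclotomic r ℚ ∣ (X : ℚ[X]) ^ (2 * n) - 1 := by
        rw [← hfac]; exact mul_dvd_mul h1 h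
      exact (cyclo_prime r hr).not_unit (hsq2 _ this)
    · rintro ⟨h2n, hnn⟩
      have h2 : cyclotomic r ℚ ∣ (X : ℚ[X]) ^ (2 * n) - 1 :=
        (cyclo_dvd_X_pow_sub_one_iff r _ hr (by omega)).mpr h2n
      rw [← hfac] at h2
      rcases (cyclo_prime r hr).dvd_mul.mp h2 with h | h
      · exact absurd ((cyclo_dvd_X_pow_sub_one_iff r n hr hn0).mp h) hnn
      · exact h
  have hXnd : ¬ ((X : ℚ[X]) ∣ X ^ n + 1) := by
    have hc : ((X : ℚ[X]) ^ n + 1).coeff 0 = 1 := by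
      simp [coeff_X_pow, hn0.ne]
    rw [X_dvd_iff, hc]
    norm_num
  have hdeg : (X ^ a + X ^ b : ℚ[X]).natDegree = a := by
    rw [hf, natDegree_mul (pow_ne_zero _ X_ne_zero)]
    · rw [natDegree_X_pow]
      have : ((X : ℚ[X]) ^ n + 1).natDegree = n := by
        simpa using natDegree_X_pow_add_C (n := n) (r := (1 : ℚ))
      omega
    · have : ((X : ℚ[X]) ^ n + 1).Monic := by
        simpa using monic_X_pow_add_C (1 : ℚ) hn0.ne'
      exact this.ne_zero
  have hmX : multiplicity (X : ℚ[X]) (X ^ a + X ^ b) = b := by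
    rw [hf]; exact multX b _ hXnd
  rw [Bd, hmX]
  rw [mult_filter_sum d _ (fun r => r ∣ 2 * n ∧ ¬ r ∣ n) (fun r hr1 hr2 => by
    rw [hf]
    by_cases h : r ∣ 2 * n ∧ ¬ r ∣ n
    · rw [multC1 r b hr1 _ hsq ((hdvd_iff r hr1).mpr h)]
      simp [h]
    · rw [multC0 r b hr1 _ (fun hc => h ((hdvd_iff r hr1).mp hc))]
      simp only [if_neg h, Nat.cast_zero])]
  have hset : (Finset.Icc 1 (2 * (X ^ a + X ^ b : ℚ[X]).natDegree ^ 2 + 1)).filter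
      (fun r => r ∣ 2 * n ∧ ¬ r ∣ n) = (2 * n).divisors \ n.divisors := by
    rw [hdeg]
    ext r
    simp only [Finset.mem_filter, Finset.mem_Icc, Finset.mem_sdiff, Nat.mem_divisors]
    constructor
    · rintro ⟨⟨h1, h2⟩, h3, h4⟩
      exact ⟨⟨h3, by omega⟩, fun hc => h4 hc.1⟩
    · rintro ⟨⟨h1, -⟩, h2⟩
      have hr0 : 0 < r := Nat.pos_of_dvd_of_pos h1 (by omega)
      have hrn : r ≤ 2 * n := Nat.le_of_dvd (by omega) h1
      have hna : n ≤ a := by omega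
      have ha1 : 1 ≤ a := by omega
      refine ⟨⟨hr0, by nlinarith⟩, h1, fun hc => h2 ⟨hc, hn0.ne'⟩⟩
  rw [hset, Finset.sum_sdiff_eq_sub (Nat.divisors_subset_of_dvd (by omega) ⟨2, by ring⟩),
    sum_divisors_w d _ hd (by omega), sum_divisors_w d n hd hn0]
  ring

/-- Let `i, j ≥ 0` and `d ≥ 2` be integers. Then
`B_d(q^{i+d} − q^j) − B_d(q^i − q^j)` equals `2d` if `i − j > 0`, equals `d` if
`−d < i − j < 0`, and equals `0` if `i − j < −d`. Also
`B_d(q^{i+d} + q^j) − B_d(q^i + q^j)` equals `2d` if `i − j > −d/2`, equals `d` if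
`i − j = −d/2`, and equals `0` if `i − j < −d/2`. -/
theorem Bd_hook_differences (d i j : ℕ) (hd : 2 ≤ d) :
    (((0 : ℤ) < (i : ℤ) - j →
        Bd d (X ^ (i + d) - X ^ j) - Bd d (X ^ i - X ^ j) = 2 * d) ∧
      (-(d : ℤ) < (i : ℤ) - j → (i : ℤ) - j < 0 →
        Bd d (X ^ (i + d) - X ^ j) - Bd d (X ^ i - X ^ j) = d) ∧
      ((i : ℤ) - j < -(d : ℤ) →
        Bd d (X ^ (i + d) - X ^ j) - Bd d (X ^ i - X ^ j) = 0)) ∧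
    ((-(d : ℤ) < 2 * ((i : ℤ) - j) →
        Bd d (X ^ (i + d) + X ^ j) - Bd d (X ^ i + X ^ j) = 2 * d) ∧
      (2 * ((i : ℤ) - j) = -(d : ℤ) →
        Bd d (X ^ (i + d) + X ^ j) - Bd d (X ^ i + X ^ j) = d) ∧
      (2 * ((i : ℤ) - j) < -(d : ℤ) →
        Bd d (X ^ (i + d) + X ^ j) - Bd d (X ^ i + X ^ j) = 0)) := by
  have hd0 : 0 < d := by omega
  refine ⟨⟨?_, ?_, ?_⟩, ?_, ?_, ?_⟩
  · -- minus, i > j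
    intro h
    have hji : j < i := by omega
    obtain ⟨n, hn0, rfl⟩ : ∃ n, 0 < n ∧ i = j + n := ⟨i - j, by omega, by omega⟩
    rw [Bd_sub d (j + n + d) j hd (by omega), Bd_sub d (j + n) j hd (by omega)]
    rw [show j + n + d - j = n + d by omega, show j + n - j = n by omega,
      Nat.add_div_right _ hd0]
    push_cast
    ring
  · -- minus, -d < i - j < 0
    intro h1 h2
    obtain ⟨m, hm0, hmd, rfl⟩ : ∃ m, 0 < m ∧ m < d ∧ j = i + m :=
      ⟨j - i, by omega, by omega, by omega⟩
    rw [show (X ^ i - X ^ (i + m) : ℚ[X]) = -(X ^ (i + m) - X ^ i) by ring, Bd_neg,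
      Bd_sub d (i + d) (i + m) hd (by omega), Bd_sub d (i + m) i hd (by omega)]
    rw [show i + d - (i + m) = d - m by omega, show i + m - i = m by omega,
      Nat.div_eq_of_lt (by omega : d - m < d), Nat.div_eq_of_lt hmd]
    push_cast [Nat.cast_sub (by omega : m ≤ d)]
    ring
  · -- minus, i - j < -d
    intro h
    obtain ⟨k, hk0, rfl⟩ : ∃ k, 0 < k ∧ j = i + d + k := ⟨j - i - d, by omega, by omega⟩
    rw [show (X ^ (i + d) - X ^ (i + d + k) : ℚ[X]) = -(X ^ (i + d + k) - X ^ (i + d)) by ring,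
      Bd_neg,
      show (X ^ i - X ^ (i + d + k) : ℚ[X]) = -(X ^ (i + d + k) - X ^ i) by ring, Bd_neg,
      Bd_sub d (i + d + k) (i + d) hd (by omega), Bd_sub d (i + d + k) i hd (by omega)]
    rw [show i + d + k - (i + d) = k by omega, show i + d + k - i = k + d by omega,
      Nat.add_div_right _ hd0]
    push_cast
    ring
  · -- plus, 2(i-j) > -d
    intro h
    rcases le_or_gt j i with hji | hij
    · rcases eq_or_lt_of_le hji with rfl | hji'
      · rw [Bd_two d j hd, Bd_add d (j + d) j hd (by omega)]
        rw [show j + d - j = d by omega,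
          (Nat.div_eq_of_lt_le (by omega) (by omega) : 2 * d / d = 2),
          Nat.div_self hd0]
        push_cast
        ring
      · obtain ⟨n, hn0, rfl⟩ : ∃ n, 0 < n ∧ i = j + n := ⟨i - j, by omega, by omega⟩
        rw [Bd_add d (j + n + d) j hd (by omega), Bd_add d (j + n) j hd (by omega)]
        rw [show j + n + d - j = n + d by omega, show j + n - j = n by omega,
          show 2 * (n + d) = 2 * n + d + d by ring,
          Nat.add_div_right _ hd0, Nat.add_div_right _ hd0, Nat.add_div_right _ hd0]
        push_cast
        ring
    · -- i < j, 2(j-i) < d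
      obtain ⟨m, hm0, hmd, rfl⟩ : ∃ m, 0 < m ∧ 2 * m < d ∧ j = i + m :=
        ⟨j - i, by omega, by omega, by omega⟩
      rw [show (X ^ i + X ^ (i + m) : ℚ[X]) = X ^ (i + m) + X ^ i by ring,
        Bd_add d (i + d) (i + m) hd (by omega), Bd_add d (i + m) i hd (by omega)]
      rw [show i + d - (i + m) = d - m by omega, show i + m - i = m by omega,
        Nat.div_eq_of_lt (by omega : d - m < d), Nat.div_eq_of_lt (by omega : m < d),
        Nat.div_eq_of_lt (by omega : 2 * m < d),
        (Nat.div_eq_of_lt_le (by omega) (by omega) : 2 * (d - m) / d = 1)]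
      push_cast [Nat.cast_sub (by omega : m ≤ d)]
      ring
  · -- plus, 2(i-j) = -d
    intro h
    obtain ⟨m, hm0, hdm, rfl⟩ : ∃ m, 0 < m ∧ d = 2 * m ∧ j = i + m :=
      ⟨j - i, by omega, by omega, by omega⟩
    rw [show (X ^ i + X ^ (i + m) : ℚ[X]) = X ^ (i + m) + X ^ i by ring,
      Bd_add d (i + d) (i + m) hd (by omega), Bd_add d (i + m) i hd (by omega)]
    rw [show i + d - (i + m) = m by omega, show i + m - i = m by omega,
      Nat.div_eq_of_lt (by omega : m < d),
      (Nat.div_eq_of_lt_le (by omega) (by omega) : 2 * m / d = 1)]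
    have hdm' : (d : ℚ) = 2 * m := by exact_mod_cast congrArg (Nat.cast (R := ℚ)) hdm
    push_cast
    linarith
  · -- plus, 2(i-j) < -d
    intro h
    obtain ⟨m, hm0, hmd, rfl⟩ : ∃ m, 0 < m ∧ d < 2 * m ∧ j = i + m :=
      ⟨j - i, by omega, by omega, by omega⟩
    rcases lt_trichotomy m d with hc | rfl | hc
    · rw [show (X ^ i + X ^ (i + m) : ℚ[X]) = X ^ (i + m) + X ^ i by ring,
        Bd_add d (i + d) (i + m) hd (by omega), Bd_add d (i + m) i hd (by omega)]
      rw [show i + d - (i + m) = d - m by omega, show i + m - i = m by omega,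
        Nat.div_eq_of_lt (by omega : d - m < d),
        Nat.div_eq_of_lt (by omega : 2 * (d - m) < d),
        Nat.div_eq_of_lt (by omega : m < d),
        (Nat.div_eq_of_lt_le (by omega) (by omega) : 2 * m / d = 1)]
      push_cast [Nat.cast_sub (by omega : m ≤ d)]
      ring
    · rw [Bd_two m (i + m) hd,
        show (X ^ i + X ^ (i + m) : ℚ[X]) = X ^ (i + m) + X ^ i by ring,
        Bd_add m (i + m) i hd (by omega)]
      rw [show i + m - i = m by omega,
        (Nat.div_eq_of_lt_le (by omega) (by omega) : 2 * m / m = 2),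
        Nat.div_self (by omega : 0 < m)]
      push_cast
      ring
    · obtain ⟨k, hk0, rfl⟩ : ∃ k, 0 < k ∧ m = d + k := ⟨m - d, by omega, by omega⟩
      rw [show (X ^ (i + d) + X ^ (i + (d + k)) : ℚ[X]) = X ^ (i + (d + k)) + X ^ (i + d) by ring,
        Bd_add d (i + (d + k)) (i + d) hd (by omega),
        show (X ^ i + X ^ (i + (d + k)) : ℚ[X]) = X ^ (i + (d + k)) + X ^ i by ring,
        Bd_add d (i + (d + k)) i hd (by omega)]
      rw [show i + (d + k) - (i + d) = k by omega, show i + (d + k) - i = k + d by omega,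
        show 2 * (k + d) = 2 * k + d + d by ring,
        Nat.add_div_right _ hd0, Nat.add_div_right _ hd0, Nat.add_div_right _ hd0]
      push_cast
      ring
end
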